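/- arXiv:2508.19435 — 3 statements merged into one kernel-verified Lean document; each statement's English description precedes it below -/
import Mathlib

section
/- For every s ≥ 2 and n ≥ s, the weak saturation number of K_s satisfies wsat(n, K_s) = C(n,2) − C(n−s+2, 2). -/
open SimpleGraph

/-- `G` contains a copy of `F`. -/
def ContainsCopy {W V : Type*} (F : SimpleGraph W) (G : SimpleGraph V) : Prop :=
  ∃ f : W ↪ V, ∀ a b, F.Adj a b → G.Adj (f a) (f b)

/-- One step of the weak saturation process: add one missing edge `e` so that the new
graph contains a copy of `F` through `e`. -/
def AddStep {W V : Type*} (F : SimpleGraph W) (G G' : SimpleGraph V) : Prop :=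
  ∃ e, e ∉ G.edgeSet ∧ G'.edgeSet = insert e G.edgeSet ∧
    ∃ f : W ↪ V, (∀ a b, F.Adj a b → G'.Adj (f a) (f b)) ∧
      ∃ a b, F.Adj a b ∧ s(f a, f b) = e

/-- `G` is weakly `F`-saturated. -/
def IsWeaklySaturated {W V : Type*} (F : SimpleGraph W) (G : SimpleGraph V) : Prop :=
  ¬ ContainsCopy F G ∧
  ∃ (m : ℕ) (c : ℕ → SimpleGraph V), c 0 = G ∧ c m = ⊤ ∧
    ∀ i < m, AddStep F (c i) (c (i + 1))

/-- The weak saturation number `wsat(n, F)`. -/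
noncomputable def wsat {W : Type*} (n : ℕ) (F : SimpleGraph W) : ℕ :=
  sInf {m | ∃ G : SimpleGraph (Fin n), IsWeaklySaturated F G ∧ G.edgeSet.ncard = m}

open Finset

/-- Vandermonde vectors -/
noncomputable def vv (n k : ℕ) (i : Fin n) : Fin k → ℚ := fun j => (i : ℚ) ^ (j : ℕ)

lemma vv_li {n k : ℕ} (T : Finset (Fin n)) (hT : T.card = k) :
    LinearIndependent ℚ (fun t : T => vv n k t) := by
  have e : T ≃ Fin k := T.equivFin.trans (finCongr hT)
  set x : Fin k → ℚ := fun i => ((e.symm i : Fin n) : ℚ) with hx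
  have hdet : (Matrix.vandermonde x).det ≠ 0 := by
    rw [Matrix.det_vandermonde]
    apply Finset.prod_ne_zero_iff.2
    intro i _
    apply Finset.prod_ne_zero_iff.2
    intro j hj
    have hij : j ≠ i := (Finset.mem_Ioi.1 hj).ne'
    have h2 : (e.symm j : Fin n) ≠ (e.symm i : Fin n) := by
      intro h
      exact hij (e.symm.injective (Subtype.ext h))
    have h3 : ((e.symm j : Fin n) : ℚ) ≠ ((e.symm i : Fin n) : ℚ) := by
      exact_mod_cast fun h => h2 (Fin.ext (by exact_mod_cast h))
    exact sub_ne_zero.2 h3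
  have hli : LinearIndependent ℚ (fun i : Fin k => Matrix.vandermonde x i) := by
    rw [show (fun i : Fin k => Matrix.vandermonde x i) = (Matrix.vandermonde x).row from rfl,
      Matrix.linearIndependent_rows_iff_isUnit]
    exact (Matrix.isUnit_iff_isUnit_det _).2 (isUnit_iff_ne_zero.2 hdet)
  have hcomp : LinearIndependent ℚ ((fun i : Fin k => Matrix.vandermonde x i) ∘ e) :=
    hli.comp e e.injective
  have heq : (fun t : T => vv n k t) = (fun i : Fin k => Matrix.vandermonde x i) ∘ e := by
    funext t
    funext j
    simp [vv, Matrix.vandermonde_apply, hx]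
  rw [heq]
  exact hcomp

lemma card_pairs (N : ℕ) : Fintype.card {p : Fin N × Fin N // p.1 < p.2} = N.choose 2 := by
  classical
  have : Fintype.card {p : Fin N × Fin N // p.1 < p.2}
      = Fintype.card ((⊤ : SimpleGraph (Fin N)).edgeFinset : Finset (Sym2 (Fin N))) := by
    apply Fintype.card_of_bijective (f := fun p =>
      (⟨s(p.1.1, p.1.2), by
        simp only [SimpleGraph.mem_edgeFinset, SimpleGraph.mem_edgeSet, SimpleGraph.top_adj]
        exact p.2.ne⟩ : ((⊤ : SimpleGraph (Fin N)).edgeFinset : Finset (Sym2 (Fin N)))))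
    constructor
    · rintro ⟨⟨a₁, a₂⟩, ha⟩ ⟨⟨b₁, b₂⟩, hb⟩ h
      simp only [Subtype.mk.injEq, Sym2.eq, Sym2.rel_iff', Prod.mk.injEq, Prod.swap_prod_mk]
        at h
      rcases h with ⟨h1, h2⟩ | ⟨h1, h2⟩
      · exact Subtype.ext (Prod.ext h1 h2)
      · exfalso; subst h1; subst h2; exact absurd hb (by simp at ha ⊢; omega)
    · rintro ⟨e, he⟩
      induction e with
      | _ a b =>
        simp only [SimpleGraph.mem_edgeFinset, SimpleGraph.mem_edgeSet, SimpleGraph.top_adj] at he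
        rcases lt_trichotomy a b with h | h | h
        · exact ⟨⟨(a, b), h⟩, rfl⟩
        · exact absurd h he
        · exact ⟨⟨(b, a), h⟩, by simp [Sym2.eq_swap]⟩
  rw [this, Fintype.card_coe, card_edgeFinset_top_eq_card_choose_two, Fintype.card_fin]

lemma pairing (k : ℕ) (A B X Y : Fin k → ℚ) :
    ∑ p : {p : Fin k × Fin k // p.1 < p.2},
      (A p.1.1 * B p.1.2 - A p.1.2 * B p.1.1) * (X p.1.1 * Y p.1.2 - X p.1.2 * Y p.1.1)
    = (∑ j, A j * X j) * (∑ j, B j * Y j) - (∑ j, A j * Y j) * (∑ j, B j * X j) := by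
  classical
  set T : Fin k → Fin k → ℚ := fun p q =>
    (A p * B q - A q * B p) * (X p * Y q - X q * Y p) with hT
  set L : ℚ := ∑ p : {p : Fin k × Fin k // p.1 < p.2}, T p.1.1 p.1.2 with hL
  -- full double sum equals twice the RHS
  have hfull : ∑ p : Fin k, ∑ q : Fin k, T p q
      = 2 * ((∑ j, A j * X j) * (∑ j, B j * Y j) - (∑ j, A j * Y j) * (∑ j, B j * X j)) := by
    have step : ∀ p : Fin k, ∑ q : Fin k, T p q
        = (A p * X p) * (∑ j, B j * Y j) - (A p * Y p) * (∑ j, B j * X j)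
          - (B p * X p) * (∑ j, A j * Y j) + (B p * Y p) * (∑ j, A j * X j) := by
      intro p
      rw [Finset.mul_sum, Finset.mul_sum, Finset.mul_sum, Finset.mul_sum]
      rw [← Finset.sum_sub_distrib, ← Finset.sum_sub_distrib, ← Finset.sum_add_distrib]
      exact Finset.sum_congr rfl fun q _ => by simp only [hT]; ring
    rw [Finset.sum_congr rfl fun p _ => step p]
    rw [Finset.sum_add_distrib, Finset.sum_sub_distrib, Finset.sum_sub_distrib,
      ← Finset.sum_mul, ← Finset.sum_mul, ← Finset.sum_mul, ← Finset.sum_mul]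
    ring
  -- full double sum equals 2 * L
  have hLfull : ∑ p : Fin k, ∑ q : Fin k, T p q = 2 * L := by
    rw [← Finset.sum_product', Finset.univ_product_univ]
    have hsplit := Finset.sum_filter_add_sum_filter_not
      (Finset.univ : Finset (Fin k × Fin k)) (fun p => p.1 < p.2) (fun p => T p.1 p.2)
    have hsplit2 := Finset.sum_filter_add_sum_filter_not
      ((Finset.univ : Finset (Fin k × Fin k)).filter (fun p => ¬ p.1 < p.2))
      (fun p => p.2 < p.1) (fun p => T p.1 p.2)
    have hdiag : ∑ p ∈ (((Finset.univ : Finset (Fin k × Fin k)).filter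
        (fun p => ¬ p.1 < p.2)).filter (fun p => ¬ p.2 < p.1)), T p.1 p.2 = 0 := by
      apply Finset.sum_eq_zero
      intro p hp
      simp only [Finset.mem_filter] at hp
      have : p.1 = p.2 := le_antisymm (not_lt.1 hp.2) (not_lt.1 hp.1.2)
      simp only [hT, this]           -- T x x = 0
      ring
    have hswap : ∑ p ∈ (((Finset.univ : Finset (Fin k × Fin k)).filter
        (fun p => ¬ p.1 < p.2)).filter (fun p => p.2 < p.1)), T p.1 p.2
        = ∑ p ∈ ((Finset.univ : Finset (Fin k × Fin k)).filter (fun p => p.1 < p.2)), T p.1 p.2 := by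
      apply Finset.sum_nbij' (i := fun p => (p.2, p.1)) (j := fun p => (p.2, p.1))
      · intro a ha; simp only [Finset.mem_filter] at ha ⊢; exact ⟨Finset.mem_univ _, ha.2⟩
      · intro a ha; simp only [Finset.mem_filter] at ha ⊢
        exact ⟨⟨Finset.mem_univ _, not_lt.2 ha.2.le⟩, ha.2⟩
      · intro a _; rfl
      · intro a _; rfl
      · intro a _; simp only [hT]; ring
    have hsub : L = ∑ p ∈ ((Finset.univ : Finset (Fin k × Fin k)).filter
        (fun p => p.1 < p.2)), T p.1 p.2 := by
      rw [hL]
      exact (Finset.sum_subtype (Finset.univ.filter (fun q : Fin k × Fin k => q.1 < q.2))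
        (fun x => by simp) (fun q => T q.1 q.2)).symm
    rw [← hsplit, ← hsplit2, hdiag, hswap, ← hsub]
    ring
  have := hLfull.symm.trans hfull
  rw [hL] at this
  linarith [this]

lemma lower {s n : ℕ} (hs : 2 ≤ s) (hn : s ≤ n) (m : ℕ) (c : ℕ → SimpleGraph (Fin n))
    (hstep : ∀ i < m, AddStep (⊤ : SimpleGraph (Fin s)) (c i) (c (i + 1))) :
    m ≤ (n - s + 2).choose 2 := by
  classical
  set k := n - s + 2 with hk
  have H : ∀ i : Fin m, ∃ x : Fin n, ∃ y : Fin n, x ≠ y ∧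
      s(x, y) ∉ (c i).edgeSet ∧
      (c ((i : ℕ) + 1)).edgeSet = insert s(x, y) ((c i).edgeSet) ∧
      ∃ f : Fin s ↪ Fin n, (∀ a b : Fin s, a ≠ b → (c ((i : ℕ) + 1)).Adj (f a) (f b)) ∧
        x ∈ Set.range ⇑f ∧ y ∈ Set.range ⇑f := by
    intro i
    obtain ⟨e, he, hins, f, hf, a, b, hab, heq⟩ := hstep i i.2
    refine ⟨f a, f b, f.injective.ne (by simpa using hab), ?_, ?_, f, ?_, ⟨a, rfl⟩, ⟨b, rfl⟩⟩
    · rw [heq]; exact he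
    · rw [heq]; exact hins
    · intro a' b' hne'; exact hf a' b' (by simpa using hne')
  choose x y hne hnot hins f hf hx hy using H
  set F : Fin m → ({p : Fin k × Fin k // p.1 < p.2} → ℚ) := fun i p =>
    vv n k (x i) p.1.1 * vv n k (y i) p.1.2 - vv n k (x i) p.1.2 * vv n k (y i) p.1.1 with hFdef
  have hFval : ∀ i p, F i p =
      vv n k (x i) p.1.1 * vv n k (y i) p.1.2 - vv n k (x i) p.1.2 * vv n k (y i) p.1.1 :=
    fun i p => rfl
  have mono : ∀ a b : ℕ, a ≤ b → b ≤ m → (c a).edgeSet ⊆ (c b).edgeSet := by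
    intro a b hab hbm
    induction b with
    | zero =>
      have : a = 0 := by omega
      subst this; exact subset_rfl
    | succ b ihb =>
      rcases Nat.eq_or_lt_of_le hab with h | h
      · subst h; exact subset_rfl
      · have h1 := ihb (by omega) (by omega)
        obtain ⟨e, _, hins', _⟩ := hstep b (by omega)
        rw [hins']
        exact h1.trans (Set.subset_insert _ _)
  have hli : LinearIndependent ℚ F := by
    rw [linearIndependent_iff']
    intro t g hsum
    have hp : ∀ p : {p : Fin k × Fin k // p.1 < p.2}, ∑ j ∈ t, g j * F j p = 0 := by
      intro p
      have h0 := congrFun hsum p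
      simpa using h0
    have key : ∀ N : ℕ, ∀ i : Fin m, (i : ℕ) = N → i ∈ t → g i = 0 := by
      intro N
      induction N using Nat.strong_induction_on with
      | _ N ih =>
        intro i hiN hit
        have hxS : x i ∈ Finset.univ.image (f i) := by
          obtain ⟨a, ha⟩ := hx i
          exact Finset.mem_image.2 ⟨a, Finset.mem_univ _, ha⟩
        have hyS : y i ∈ Finset.univ.image (f i) := by
          obtain ⟨b, hb⟩ := hy i
          exact Finset.mem_image.2 ⟨b, Finset.mem_univ _, hb⟩
        have hScard : (Finset.univ.image (f i)).card = s := by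
          rw [Finset.card_image_of_injective _ (f i).injective, Finset.card_univ,
            Fintype.card_fin]
        have hxyne : x i ≠ y i := hne i
        have hyni : y i ∉ (Finset.univ.image (f i))ᶜ := by simp [hyS]
        have hxni : x i ∉ insert (y i) (Finset.univ.image (f i))ᶜ := by simp [hxS, hxyne]
        have hTcard : (insert (x i) (insert (y i) (Finset.univ.image (f i))ᶜ)).card = k := by
          rw [Finset.card_insert_of_notMem hxni, Finset.card_insert_of_notMem hyni,
            Finset.card_compl, hScard, Fintype.card_fin]
        have hxT : x i ∈ insert (x i) (insert (y i) (Finset.univ.image (f i))ᶜ) :=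
          Finset.mem_insert_self _ _
        have hyT : y i ∈ insert (x i) (insert (y i) (Finset.univ.image (f i))ᶜ) :=
          Finset.mem_insert_of_mem (Finset.mem_insert_self _ _)
        set T : Finset (Fin n) := insert (x i) (insert (y i) (Finset.univ.image (f i))ᶜ)
          with hTdef
        have hnonempty : Nonempty T := ⟨⟨x i, hxT⟩⟩
        have hcardeq : Fintype.card T = Module.finrank ℚ (Fin k → ℚ) := by
          rw [Fintype.card_coe, hTcard, Module.finrank_fintype_fun_eq_card, Fintype.card_fin]
        have hbas : ∀ t' : T,
            basisOfLinearIndependentOfCardEqFinrank (vv_li T hTcard) hcardeq t' = vv n k t' :=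
          fun t' =>
            congrFun (coe_basisOfLinearIndependentOfCardEqFinrank (vv_li T hTcard) hcardeq) t'
        set bas := basisOfLinearIndependentOfCardEqFinrank (vv_li T hTcard) hcardeq with hbasdef
        have hLaval : ∀ z : T, bas.coord ⟨x i, hxT⟩ (vv n k z)
            = if z = (⟨x i, hxT⟩ : T) then 1 else 0 := by
          intro z
          rw [← hbas z, Module.Basis.coord_apply, Module.Basis.repr_self, Finsupp.single_apply]
        have hLbval : ∀ z : T, bas.coord ⟨y i, hyT⟩ (vv n k z)
            = if z = (⟨y i, hyT⟩ : T) then 1 else 0 := by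
          intro z
          rw [← hbas z, Module.Basis.coord_apply, Module.Basis.repr_self, Finsupp.single_apply]
        have hLa : ∀ w : Fin k → ℚ, bas.coord ⟨x i, hxT⟩ w
            = ∑ j, bas.coord ⟨x i, hxT⟩ (fun j' => if j = j' then 1 else 0) * w j := by
          intro w
          conv_lhs => rw [pi_eq_sum_univ w, map_sum]
          exact Finset.sum_congr rfl fun j _ => by
            rw [map_smul, smul_eq_mul, mul_comm]
        have hLb : ∀ w : Fin k → ℚ, bas.coord ⟨y i, hyT⟩ w
            = ∑ j, bas.coord ⟨y i, hyT⟩ (fun j' => if j = j' then 1 else 0) * w j := by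
          intro w
          conv_lhs => rw [pi_eq_sum_univ w, map_sum]
          exact Finset.sum_congr rfl fun j _ => by
            rw [map_smul, smul_eq_mul, mul_comm]
        set A : Fin k → ℚ := fun j => bas.coord ⟨x i, hxT⟩ (fun j' => if j = j' then 1 else 0)
          with hAdef
        set B : Fin k → ℚ := fun j => bas.coord ⟨y i, hyT⟩ (fun j' => if j = j' then 1 else 0)
          with hBdef
        have key2 : ∀ j : Fin m, ∑ p : {p : Fin k × Fin k // p.1 < p.2},
            (A p.1.1 * B p.1.2 - A p.1.2 * B p.1.1) * F j p
            = bas.coord ⟨x i, hxT⟩ (vv n k (x j)) * bas.coord ⟨y i, hyT⟩ (vv n k (y j))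
              - bas.coord ⟨x i, hxT⟩ (vv n k (y j)) * bas.coord ⟨y i, hyT⟩ (vv n k (x j)) := by
          intro j
          have hpair := pairing k A B (vv n k (x j)) (vv n k (y j))
          rw [hLa (vv n k (x j)), hLa (vv n k (y j)), hLb (vv n k (x j)), hLb (vv n k (y j))]
          rw [← hpair]
        have houtside : ∀ z : Fin n, z ∉ Finset.univ.image (f i) →
            bas.coord ⟨x i, hxT⟩ (vv n k z) = 0 ∧ bas.coord ⟨y i, hyT⟩ (vv n k z) = 0 := by
          intro z hz
          have hzT : z ∈ T := by
            rw [hTdef]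
            exact Finset.mem_insert_of_mem (Finset.mem_insert_of_mem (Finset.mem_compl.2 hz))
          constructor
          · rw [hLaval ⟨z, hzT⟩, if_neg]
            intro h
            exact hz (by rw [show z = x i from congrArg Subtype.val h]; exact hxS)
          · rw [hLbval ⟨z, hzT⟩, if_neg]
            intro h
            exact hz (by rw [show z = y i from congrArg Subtype.val h]; exact hyS)
        have hsum2 : ∑ j ∈ t, g j *
            (bas.coord ⟨x i, hxT⟩ (vv n k (x j)) * bas.coord ⟨y i, hyT⟩ (vv n k (y j))
              - bas.coord ⟨x i, hxT⟩ (vv n k (y j)) * bas.coord ⟨y i, hyT⟩ (vv n k (x j))) = 0 := by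
          have e1 : ∀ j ∈ t, g j *
              (bas.coord ⟨x i, hxT⟩ (vv n k (x j)) * bas.coord ⟨y i, hyT⟩ (vv n k (y j))
                - bas.coord ⟨x i, hxT⟩ (vv n k (y j)) * bas.coord ⟨y i, hyT⟩ (vv n k (x j)))
              = ∑ p : {p : Fin k × Fin k // p.1 < p.2},
                (A p.1.1 * B p.1.2 - A p.1.2 * B p.1.1) * (g j * F j p) := by
            intro j _
            rw [← key2 j, Finset.mul_sum]
            exact Finset.sum_congr rfl fun p _ => by ring
          rw [Finset.sum_congr rfl e1, Finset.sum_comm]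
          apply Finset.sum_eq_zero
          intro p _
          rw [← Finset.mul_sum, hp p, mul_zero]
        rw [Finset.sum_eq_single_of_mem i hit] at hsum2
        · have hΦi : bas.coord ⟨x i, hxT⟩ (vv n k (x i)) * bas.coord ⟨y i, hyT⟩ (vv n k (y i))
              - bas.coord ⟨x i, hxT⟩ (vv n k (y i)) * bas.coord ⟨y i, hyT⟩ (vv n k (x i)) = 1 := by
            rw [hLaval ⟨x i, hxT⟩, hLbval ⟨y i, hyT⟩, hLaval ⟨y i, hyT⟩, hLbval ⟨x i, hxT⟩]
            rw [if_pos rfl, if_pos rfl, if_neg, if_neg]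
            · ring
            · intro h; exact hxyne (congrArg Subtype.val h)
            · intro h; exact hxyne (congrArg Subtype.val h).symm
          rw [hΦi, mul_one] at hsum2
          exact hsum2
        · intro j hjt hjne
          rcases lt_trichotomy (j : ℕ) (i : ℕ) with h | h | h
          · rw [ih (j : ℕ) (hiN ▸ h) j rfl hjt, zero_mul]
          · exact absurd (Fin.ext h) hjne
          · have houts : x j ∉ Finset.univ.image (f i) ∨ y j ∉ Finset.univ.image (f i) := by
              by_contra hc
              push_neg at hc
              obtain ⟨a, _, ha⟩ := Finset.mem_image.1 hc.1
              obtain ⟨b, _, hb⟩ := Finset.mem_image.1 hc.2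
              have hab : a ≠ b := by
                intro h'
                exact hne j (by rw [← ha, ← hb, h'])
              have hadj := hf i a b hab
              have hmem : s(x j, y j) ∈ (c ((i : ℕ) + 1)).edgeSet := by
                rw [← ha, ← hb]; exact hadj
              have hsub := mono ((i : ℕ) + 1) (j : ℕ) (by omega) j.2.le
              exact hnot j (hsub hmem)
            have hΦj : bas.coord ⟨x i, hxT⟩ (vv n k (x j)) * bas.coord ⟨y i, hyT⟩ (vv n k (y j))
                - bas.coord ⟨x i, hxT⟩ (vv n k (y j)) * bas.coord ⟨y i, hyT⟩ (vv n k (x j))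
                = 0 := by
              rcases houts with h' | h'
              · rw [(houtside _ h').1, (houtside _ h').2]; ring
              · rw [(houtside _ h').1, (houtside _ h').2]; ring
            rw [hΦj, mul_zero]
    intro i hit
    exact key (i : ℕ) i rfl hit
  have hcard := hli.fintype_card_le_finrank
  rw [Fintype.card_fin] at hcard
  calc m ≤ Module.finrank ℚ ({p : Fin k × Fin k // p.1 < p.2} → ℚ) := hcard
    _ = Fintype.card {p : Fin k × Fin k // p.1 < p.2} := Module.finrank_fintype_fun_eq_card ℚ
    _ = k.choose 2 := card_pairs k


/-- The extremal construction: all edges meeting the first `s-2` vertices. -/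
def G0 (s n : ℕ) : SimpleGraph (Fin n) where
  Adj i j := i ≠ j ∧ ((i : ℕ) < s - 2 ∨ (j : ℕ) < s - 2)
  symm := ⟨fun i j h => ⟨h.1.symm, h.2.symm⟩⟩
  loopless := ⟨fun i h => h.1 rfl⟩

/-- The complement part: edges within the last `n-s+2` vertices. -/
def Gc (s n : ℕ) : SimpleGraph (Fin n) where
  Adj i j := i ≠ j ∧ s - 2 ≤ (i : ℕ) ∧ s - 2 ≤ (j : ℕ)
  symm := ⟨fun i j h => ⟨h.1.symm, h.2.2, h.2.1⟩⟩
  loopless := ⟨fun i h => h.1 rfl⟩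

instance (s n : ℕ) : DecidableRel (G0 s n).Adj :=
  fun a b => inferInstanceAs (Decidable (a ≠ b ∧ ((a : ℕ) < s - 2 ∨ (b : ℕ) < s - 2)))

instance (s n : ℕ) : DecidableRel (Gc s n).Adj :=
  fun a b => inferInstanceAs (Decidable (a ≠ b ∧ s - 2 ≤ (a : ℕ) ∧ s - 2 ≤ (b : ℕ)))

lemma G0_sup_Gc (s n : ℕ) : G0 s n ⊔ Gc s n = ⊤ := by
  ext a b
  simp only [SimpleGraph.sup_adj, SimpleGraph.top_adj, G0, Gc]
  constructor
  · rintro (⟨h, _⟩ | ⟨h, _⟩) <;> exact h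
  · intro h
    rcases lt_or_ge (a : ℕ) (s - 2) with h1 | h1
    · exact Or.inl ⟨h, Or.inl h1⟩
    rcases lt_or_ge (b : ℕ) (s - 2) with h2 | h2
    · exact Or.inl ⟨h, Or.inr h2⟩
    · exact Or.inr ⟨h, h1, h2⟩

lemma G0_Gc_disj (s n : ℕ) : ∀ e, e ∈ (G0 s n).edgeSet → e ∈ (Gc s n).edgeSet → False := by
  intro e
  induction e with
  | _ a b =>
    intro h1 h2
    rw [SimpleGraph.mem_edgeSet] at h1 h2
    obtain ⟨-, h1⟩ := h1
    obtain ⟨-, h2, h3⟩ := h2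
    omega

lemma Gc_card (s n : ℕ) (hs : 2 ≤ s) (hn : s ≤ n) :
    (Gc s n).edgeFinset.card = (n - s + 2).choose 2 := by
  classical
  set k := n - s + 2 with hk
  have hemb : ∀ j : Fin k, (j : ℕ) + (s - 2) < n := fun j => by have := j.2; omega
  have hcard : Fintype.card {p : Fin k × Fin k // p.1 < p.2}
      = Fintype.card ((Gc s n).edgeFinset : Finset (Sym2 (Fin n))) := by
    apply Fintype.card_of_bijective (f := fun q =>
      (⟨s((⟨(q.1.1 : ℕ) + (s - 2), hemb q.1.1⟩ : Fin n), ⟨(q.1.2 : ℕ) + (s - 2), hemb q.1.2⟩),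
        by
          rw [SimpleGraph.mem_edgeFinset, SimpleGraph.mem_edgeSet]
          refine ⟨?_, by simp, by simp⟩
          intro h
          have := congrArg Fin.val h
          simp only at this
          have := q.2
          omega⟩ : ((Gc s n).edgeFinset : Finset (Sym2 (Fin n)))))
    constructor
    · rintro ⟨⟨a₁, a₂⟩, ha⟩ ⟨⟨b₁, b₂⟩, hb⟩ h
      have q1 : (a₁ : ℕ) < (a₂ : ℕ) := ha
      have q2 : (b₁ : ℕ) < (b₂ : ℕ) := hb
      simp only [Subtype.mk.injEq, Sym2.eq, Sym2.rel_iff', Prod.mk.injEq, Prod.swap_prod_mk]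
        at h
      apply Subtype.ext
      dsimp only
      rw [Prod.mk.injEq]
      rcases h with ⟨h1, h2⟩ | ⟨h1, h2⟩
      · simp only [Fin.mk.injEq] at h1 h2
        exact ⟨Fin.ext (by omega), Fin.ext (by omega)⟩
      · simp only [Fin.mk.injEq] at h1 h2
        exact absurd rfl (by omega : ¬ (0:ℕ) = 0)
    · rintro ⟨e, he⟩
      induction e with
      | _ a b =>
        rw [SimpleGraph.mem_edgeFinset, SimpleGraph.mem_edgeSet] at he
        obtain ⟨hne, hga, hgb⟩ := he
        have ha2 := a.2
        have hb2 := b.2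
        have hvne : (a : ℕ) ≠ (b : ℕ) := fun h => hne (Fin.ext h)
        rcases lt_or_gt_of_ne hvne with h | h
        · refine ⟨⟨(⟨(a : ℕ) - (s - 2), by omega⟩, ⟨(b : ℕ) - (s - 2), by omega⟩),
            by simp only [Fin.lt_def]; omega⟩, ?_⟩
          apply Subtype.ext
          dsimp only
          rw [Sym2.eq_iff]
          exact Or.inl ⟨Fin.ext (show (a : ℕ) - (s - 2) + (s - 2) = (a : ℕ) by omega),
            Fin.ext (show (b : ℕ) - (s - 2) + (s - 2) = (b : ℕ) by omega)⟩
        · refine ⟨⟨(⟨(b : ℕ) - (s - 2), by omega⟩, ⟨(a : ℕ) - (s - 2), by omega⟩),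
            by simp only [Fin.lt_def]; omega⟩, ?_⟩
          apply Subtype.ext
          dsimp only
          rw [Sym2.eq_iff]
          exact Or.inr ⟨Fin.ext (show (b : ℕ) - (s - 2) + (s - 2) = (b : ℕ) by omega),
            Fin.ext (show (a : ℕ) - (s - 2) + (s - 2) = (a : ℕ) by omega)⟩
  rw [← Fintype.card_coe, ← hcard, card_pairs]

lemma G0_card (s n : ℕ) (hs : 2 ≤ s) (hn : s ≤ n) :
    (G0 s n).edgeSet.ncard = n.choose 2 - (n - s + 2).choose 2 := by
  classical
  have hdisj : Disjoint (G0 s n).edgeSet (Gc s n).edgeSet :=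
    Set.disjoint_left.2 fun e h1 h2 => G0_Gc_disj s n e h1 h2
  have hsup : ((G0 s n) ⊔ (Gc s n)).edgeSet.ncard = n.choose 2 := by
    rw [G0_sup_Gc]
    rw [← SimpleGraph.coe_edgeFinset, Set.ncard_coe_finset,
      SimpleGraph.card_edgeFinset_top_eq_card_choose_two, Fintype.card_fin]
  rw [SimpleGraph.edgeSet_sup, Set.ncard_union_eq hdisj (Set.toFinite _) (Set.toFinite _)]
    at hsup
  have h2 : (Gc s n).edgeSet.ncard = (n - s + 2).choose 2 := by
    rw [← SimpleGraph.coe_edgeFinset, Set.ncard_coe_finset]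
    exact Gc_card s n hs hn
  omega

lemma G0_free (s n : ℕ) (hs : 2 ≤ s) :
    ¬ ContainsCopy (⊤ : SimpleGraph (Fin s)) (G0 s n) := by
  classical
  rintro ⟨f, hf⟩
  set B : Finset (Fin s) := Finset.univ.filter (fun a => (f a : ℕ) < s - 2) with hB
  have hAcard : (Finset.univ.filter (fun a : Fin s => ¬ (f a : ℕ) < s - 2)).card ≤ 1 := by
    rw [Finset.card_le_one]
    intro a ha b hb
    by_contra hne
    have hadj := hf a b (by simpa using hne)
    simp only [Finset.mem_filter] at ha hb
    rcases hadj.2 with h | h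
    · exact ha.2 h
    · exact hb.2 h
  have hsum : B.card + (Finset.univ.filter (fun a : Fin s => ¬ (f a : ℕ) < s - 2)).card = s := by
    rw [hB, Finset.card_filter_add_card_filter_not, Finset.card_univ, Fintype.card_fin]
  have hBim : B.image (fun a => (f a : ℕ)) ⊆ Finset.range (s - 2) := by
    intro v hv
    obtain ⟨a, ha, rfl⟩ := Finset.mem_image.1 hv
    rw [hB, Finset.mem_filter] at ha
    exact Finset.mem_range.2 ha.2
  have hBcard : B.card ≤ s - 2 := by
    have hinj : Set.InjOn (fun a => (f a : ℕ)) B := by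
      intro a _ b _ h
      exact f.injective (Fin.ext h)
    calc B.card = (B.image (fun a => (f a : ℕ))).card := (Finset.card_image_of_injOn hinj).symm
      _ ≤ (Finset.range (s - 2)).card := Finset.card_le_card hBim
      _ = s - 2 := Finset.card_range _
  omega


lemma step_embed {s n : ℕ} (hs : 2 ≤ s) (hn : s ≤ n) (x y : Fin n) (hxy : x ≠ y)
    (hx : s - 2 ≤ (x : ℕ)) (hy : s - 2 ≤ (y : ℕ)) (G : SimpleGraph (Fin n))
    (hG : G0 s n ≤ G) (hadj : G.Adj x y) :
    ∃ f : Fin s ↪ Fin n,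
      (∀ a b : Fin s, (⊤ : SimpleGraph (Fin s)).Adj a b → G.Adj (f a) (f b)) ∧
      ∃ a b : Fin s, (⊤ : SimpleGraph (Fin s)).Adj a b ∧ s(f a, f b) = s(x, y) := by
  have hxyv : (x : ℕ) ≠ (y : ℕ) := fun h => hxy (Fin.ext h)
  set f0 : Fin s → Fin n := fun a =>
    if (a : ℕ) < s - 2 then ⟨(a : ℕ), by omega⟩ else if (a : ℕ) = s - 2 then x else y with hf0
  have hinj : Function.Injective f0 := by
    intro a b hab
    apply Fin.ext
    have h := congrArg Fin.val hab
    simp only [hf0, apply_ite Fin.val] at h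
    have ha2 := a.2
    have hb2 := b.2
    split_ifs at h <;> omega
  have hlt : ∀ a : Fin s, (a : ℕ) < s - 2 → ((f0 a) : ℕ) < s - 2 := by
    intro a h
    simp only [hf0]
    rw [if_pos h]
    exact h
  have hmem : ∀ a : Fin s, ¬ ((a : ℕ) < s - 2) → f0 a = x ∨ f0 a = y := by
    intro a h
    simp only [hf0]
    rw [if_neg h]
    by_cases h2 : (a : ℕ) = s - 2
    · rw [if_pos h2]; exact Or.inl rfl
    · rw [if_neg h2]; exact Or.inr rfl
  refine ⟨⟨f0, hinj⟩, ?_, ?_⟩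
  · intro a b hab
    show G.Adj (f0 a) (f0 b)
    rw [SimpleGraph.top_adj] at hab
    have hne2 : f0 a ≠ f0 b := fun h => hab (hinj h)
    by_cases ha : (a : ℕ) < s - 2
    · exact hG ⟨hne2, Or.inl (hlt a ha)⟩
    · by_cases hb : (b : ℕ) < s - 2
      · exact hG ⟨hne2, Or.inr (hlt b hb)⟩
      · rcases hmem a ha with h1 | h1 <;> rcases hmem b hb with h2 | h2
        · exact absurd (h1.trans h2.symm) hne2
        · rw [h1, h2]; exact hadj
        · rw [h1, h2]; exact hadj.symm
        · exact absurd (h1.trans h2.symm) hne2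
  · refine ⟨⟨s - 2, by omega⟩, ⟨s - 1, by omega⟩, ?_, ?_⟩
    · rw [SimpleGraph.top_adj]
      intro h
      have := congrArg Fin.val h
      simp only at this
      omega
    · have e1 : f0 ⟨s - 2, by omega⟩ = x := by
        simp only [hf0]
        rw [if_neg (by omega)]
        simp
      have e2 : f0 ⟨s - 1, by omega⟩ = y := by
        simp only [hf0]
        rw [if_neg (by omega), if_neg (by omega)]
      show s(f0 _, f0 _) = s(x, y)
      rw [e1, e2]

lemma process {s n : ℕ} (hs : 2 ≤ s) (hn : s ≤ n) :
    ∀ E : Finset (Sym2 (Fin n)), (↑E : Set (Sym2 (Fin n))) ⊆ (Gc s n).edgeSet →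
    ∃ c : ℕ → SimpleGraph (Fin n), c 0 = G0 s n ∧
      c E.card = G0 s n ⊔ SimpleGraph.fromEdgeSet ↑E ∧
      ∀ i < E.card, AddStep (⊤ : SimpleGraph (Fin s)) (c i) (c (i + 1)) := by
  intro E
  induction E using Finset.induction_on with
  | empty =>
    intro _
    refine ⟨fun _ => G0 s n, rfl, by simp, by simp⟩
  | @insert a E' ha ih =>
    intro hsub
    obtain ⟨c, hc0, hcend, hcstep⟩ :=
      ih (fun e he => hsub (by simp only [Finset.coe_insert, Set.mem_insert_iff]; right; exact he))
    refine ⟨fun i => if i ≤ E'.card then c i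
      else G0 s n ⊔ SimpleGraph.fromEdgeSet ↑(insert a E'), ?_, ?_, ?_⟩
    · show (if 0 ≤ E'.card then c 0 else _) = _
      rw [if_pos (Nat.zero_le _), hc0]
    · show (if (insert a E').card ≤ E'.card then c _ else _) = _
      rw [Finset.card_insert_of_notMem ha, if_neg (by omega)]
    · intro i hi
      show AddStep _ (if i ≤ E'.card then c i else _) (if i + 1 ≤ E'.card then c (i + 1) else _)
      rw [Finset.card_insert_of_notMem ha] at hi
      rcases Nat.lt_or_ge i E'.card with h | h
      · rw [if_pos (show i + 1 ≤ E'.card by omega), if_pos (show i ≤ E'.card by omega)]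
        exact hcstep i h
      · have hiN : i = E'.card := by omega
        subst hiN
        rw [if_pos le_rfl, if_neg (by omega), hcend]
        have haGc : a ∈ (Gc s n).edgeSet := hsub (by simp)
        clear hi hcend hc0 hcstep
        revert hsub haGc ha
        induction a using Sym2.ind with
        | _ x y =>
          intro ha hsub haGc
          rw [SimpleGraph.mem_edgeSet] at haGc
          obtain ⟨hxy, hxv, hyv⟩ := haGc
          have hG0a : s(x, y) ∉ (G0 s n).edgeSet := fun h =>
            G0_Gc_disj s n _ h ((SimpleGraph.mem_edgeSet _).2 ⟨hxy, hxv, hyv⟩)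
          have hnd : s(x, y) ∉ {e : Sym2 (Fin n) | e.IsDiag} := by
            simp only [Set.mem_setOf_eq, Sym2.mk_isDiag_iff]
            exact hxy
          refine ⟨s(x, y), ?_, ?_, ?_⟩
          · rw [SimpleGraph.edgeSet_sup, SimpleGraph.edgeSet_fromEdgeSet]
            rintro (h | ⟨h, -⟩)
            · exact hG0a h
            · exact ha (Finset.mem_coe.1 h)
          · rw [SimpleGraph.edgeSet_sup, SimpleGraph.edgeSet_sup,
              SimpleGraph.edgeSet_fromEdgeSet, SimpleGraph.edgeSet_fromEdgeSet,
              Finset.coe_insert, Set.insert_diff_of_notMem _ (show s(x, y) ∉ Sym2.diagSet from hnd), Set.union_insert]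
          · apply step_embed hs hn x y hxy hxv hyv _ le_sup_left
            rw [SimpleGraph.sup_adj, SimpleGraph.fromEdgeSet_adj]
            exact Or.inr ⟨by simp, hxy⟩

lemma G0_saturated {s n : ℕ} (hs : 2 ≤ s) (hn : s ≤ n) :
    IsWeaklySaturated (⊤ : SimpleGraph (Fin s)) (G0 s n) := by
  classical
  refine ⟨G0_free s n hs, (Gc s n).edgeFinset.card, ?_⟩
  obtain ⟨c, hc0, hcend, hcstep⟩ := process hs hn (Gc s n).edgeFinset
    (by rw [SimpleGraph.coe_edgeFinset])
  refine ⟨c, hc0, ?_, hcstep⟩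
  rw [hcend, SimpleGraph.coe_edgeFinset, SimpleGraph.fromEdgeSet_edgeSet, G0_sup_Gc]

/-- For every `s ≥ 2` and `n ≥ s`, `wsat(n, K_s) = C(n,2) − C(n−s+2, 2)`. -/
theorem wsat_complete (s n : ℕ) (hs : 2 ≤ s) (hn : s ≤ n) :
    wsat n (⊤ : SimpleGraph (Fin s)) = n.choose 2 - (n - s + 2).choose 2 := by
  classical
  have hmem : n.choose 2 - (n - s + 2).choose 2 ∈
      {m | ∃ G : SimpleGraph (Fin n),
        IsWeaklySaturated (⊤ : SimpleGraph (Fin s)) G ∧ G.edgeSet.ncard = m} :=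
    ⟨G0 s n, G0_saturated hs hn, G0_card s n hs hn⟩
  apply le_antisymm
  · exact Nat.sInf_le hmem
  · apply le_csInf ⟨_, hmem⟩
    rintro b ⟨G, ⟨-, m, c, hc0, hcm, hstep⟩, rfl⟩
    have hm := lower hs hn m c hstep
    have hcount : ∀ i ≤ m, (c i).edgeSet.ncard = G.edgeSet.ncard + i := by
      intro i
      induction i with
      | zero => intro _; rw [hc0, Nat.add_zero]
      | succ i ihi =>
        intro h
        obtain ⟨e, he, hins, -⟩ := hstep i (by omega)
        rw [hins, Set.ncard_insert_of_notMem he (Set.toFinite _), ihi (by omega)]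
        omega
    have htop : (c m).edgeSet.ncard = n.choose 2 := by
      rw [hcm, ← SimpleGraph.coe_edgeFinset, Set.ncard_coe_finset,
        SimpleGraph.card_edgeFinset_top_eq_card_choose_two, Fintype.card_fin]
    have hfin := hcount m le_rfl
    omega
end

section
/- For every n > t+1 with t ≥ 1, the weak saturation number of the star K_{1,t} satisfies wsat(n, K_{1,t}) = C(t,2). -/
open SimpleGraph

open Finset
open scoped Classical

variable {n t : ℕ}

/-- degree-like count -/
noncomputable def dg (G : SimpleGraph (Fin n)) (v : Fin n) : ℕ :=
  (Finset.univ.filter (fun w => G.Adj v w)).card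

lemma star_embed (G : SimpleGraph (Fin n)) (v : Fin n) (s : Finset (Fin n))
    (hcard : s.card = t) (hadj : ∀ w ∈ s, G.Adj v w) :
    ∃ f : (Fin 1 ⊕ Fin t) ↪ Fin n,
      (∀ a b, (completeBipartiteGraph (Fin 1) (Fin t)).Adj a b → G.Adj (f a) (f b)) ∧
      f (Sum.inl 0) = v ∧ ∀ w ∈ s, ∃ i : Fin t, f (Sum.inr i) = w := by
  have e : Fin t ≃ {x // x ∈ s} := (s.equivFin.trans (finCongr hcard)).symm
  set g : Fin t → Fin n := fun i => ((e i : {x // x ∈ s}) : Fin n) with hg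
  have hgs : ∀ i, g i ∈ s := fun i => (e i).2
  have hginj : Function.Injective g := fun i j hij => e.injective (Subtype.ext hij)
  have hgv : ∀ i, g i ≠ v := fun i h => (G.ne_of_adj (hadj _ (hgs i))).symm h
  refine ⟨⟨Sum.elim (fun _ => v) g, ?_⟩, ?_, rfl, ?_⟩
  · rintro (a | a) (b | b) hab
    · simp [Subsingleton.elim a b]
    · exact absurd (hgv b (by simpa using hab.symm)) (fun h => h)
    · exact absurd (hgv a (by simpa using hab)) (fun h => h)
    · simpa using hginj (by simpa using hab)
  · rintro (a | a) (b | b) hab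
    · simp at hab
    · exact hadj _ (hgs b)
    · exact (hadj _ (hgs a)).symm
    · simp at hab
  · intro w hw
    exact ⟨e.symm ⟨w, hw⟩, by simp [hg]⟩

lemma embed_dg {G : SimpleGraph (Fin n)} (f : (Fin 1 ⊕ Fin t) ↪ Fin n)
    (hf : ∀ a b, (completeBipartiteGraph (Fin 1) (Fin t)).Adj a b → G.Adj (f a) (f b)) :
    t ≤ dg G (f (Sum.inl 0)) := by
  have hinj : Function.Injective (fun i : Fin t => f (Sum.inr i)) := by
    intro i j hij
    simpa using f.injective hij
  have hsub : (Finset.univ.image (fun i : Fin t => f (Sum.inr i))) ⊆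
      Finset.univ.filter (fun w => G.Adj (f (Sum.inl 0)) w) := by
    intro w hw
    simp only [Finset.mem_image] at hw
    obtain ⟨i, _, rfl⟩ := hw
    simp only [Finset.mem_filter, Finset.mem_univ, true_and]
    exact hf (Sum.inl 0) (Sum.inr i) (by simp)
  calc t = (Finset.univ.image (fun i : Fin t => f (Sum.inr i))).card := by
            rw [Finset.card_image_of_injective _ hinj, Finset.card_univ, Fintype.card_fin]
    _ ≤ _ := Finset.card_le_card hsub

lemma containsCopy_iff_dg (G : SimpleGraph (Fin n)) :
    ContainsCopy (completeBipartiteGraph (Fin 1) (Fin t)) G ↔ ∃ v, t ≤ dg G v := by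
  constructor
  · rintro ⟨f, hf⟩
    exact ⟨f (Sum.inl 0), embed_dg f hf⟩
  · rintro ⟨v, hv⟩
    obtain ⟨s, hs, hcard⟩ := Finset.exists_subset_card_eq hv
    obtain ⟨f, hf, -, -⟩ := star_embed G v s hcard (fun w hw => (Finset.mem_filter.mp (hs hw)).2)
    exact ⟨f, hf⟩

lemma addStep_center {G G' : SimpleGraph (Fin n)}
    (h : AddStep (completeBipartiteGraph (Fin 1) (Fin t)) G G') :
    ∃ u b : Fin n, s(u, b) ∉ G.edgeSet ∧ G'.edgeSet = insert s(u, b) G.edgeSet ∧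
      t ≤ dg G' u := by
  obtain ⟨e, he, hins, f, hf, a, b, hab, hfe⟩ := h
  have hdg := embed_dg f hf
  rcases a with a | a <;> rcases b with b | b
  · simp at hab
  · refine ⟨f (Sum.inl a), f (Sum.inr b), ?_, ?_, ?_⟩ <;>
      rw [Subsingleton.elim (0 : Fin 1) a] at hdg <;> simp_all
  · have hfe' : s(f (Sum.inl b), f (Sum.inr a)) = e := by rw [← hfe]; exact Sym2.eq_swap
    refine ⟨f (Sum.inl b), f (Sum.inr a), ?_, ?_, ?_⟩ <;>
      rw [Subsingleton.elim (0 : Fin 1) b] at hdg <;> simp_all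
  · simp at hab

lemma lower_bound (ht : 1 ≤ t) (hn : t + 1 < n) (G : SimpleGraph (Fin n))
    (hws : IsWeaklySaturated (completeBipartiteGraph (Fin 1) (Fin t)) G) :
    t.choose 2 ≤ G.edgeSet.ncard := by
  obtain ⟨hfree, m, c, h0, hm, hstep⟩ := hws
  -- every vertex eventually has large degree
  have hdgm : ∀ v : Fin n, t ≤ dg (c m) v := by
    intro v
    have : Finset.univ.filter (fun w => (c m).Adj v w) = Finset.univ.erase v := by
      ext w
      simp [hm, eq_comm, Ne, adj_comm]
    rw [dg, this, Finset.card_erase_of_mem (Finset.mem_univ v), Finset.card_univ,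
      Fintype.card_fin]
    omega
  have hEx : ∀ v : Fin n, ∃ i, t ≤ dg (c i) v := fun v => ⟨m, hdgm v⟩
  set T : Fin n → ℕ := fun v => Nat.find (hEx v) with hT
  have hTspec : ∀ v, t ≤ dg (c (T v)) v := fun v => Nat.find_spec (hEx v)
  have hTmin : ∀ v, ∀ i < T v, dg (c i) v < t := fun v i hi =>
    Nat.lt_of_not_le (Nat.find_min (hEx v) hi)
  have hTle : ∀ v i, t ≤ dg (c i) v → T v ≤ i := fun v i h => Nat.find_le h
  have hTm : ∀ v, T v ≤ m := fun v => hTle v m (hdgm v)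
  have hT0 : ∀ v, 0 < T v := by
    intro v
    by_contra h
    have h' : T v = 0 := by omega
    have := hTspec v
    rw [h', h0] at this
    exact hfree ((containsCopy_iff_dg G).mpr ⟨v, this⟩)
  -- edges appear at some step
  have happear : ∀ i, i ≤ m → ∀ e, e ∈ (c i).edgeSet →
      e ∈ G.edgeSet ∨ ∃ j, j + 1 ≤ i ∧ e ∉ (c j).edgeSet ∧ e ∈ (c (j + 1)).edgeSet := by
    intro i
    induction i with
    | zero => intro _ e he; left; rwa [h0] at he
    | succ k ih =>
      intro hk e he
      by_cases h : e ∈ (c k).edgeSet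
      · rcases ih (by omega) e h with h' | ⟨j, hj, h1, h2⟩
        · exact Or.inl h'
        · exact Or.inr ⟨j, by omega, h1, h2⟩
      · exact Or.inr ⟨k, le_refl _, h, he⟩
  -- key lemma: neighbors of v just before v joins
  have hL : ∀ v w : Fin n, (c (T v - 1)).Adj v w → G.Adj v w ∨ T w < T v := by
    intro v w hadj
    have h1 : T v - 1 ≤ m := le_trans (Nat.sub_le _ _) (hTm v)
    rcases happear (T v - 1) h1 s(v, w) hadj with h | ⟨j, hj, hnot, hyes⟩
    · exact Or.inl h
    · have hjm : j < m := by
        have := hTm v; omega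
      obtain ⟨u, bb, hne, hins, hdeg⟩ := addStep_center (hstep j hjm)
      have heq : s(v, w) = s(u, bb) := by
        rw [hins] at hyes
        rcases hyes with h | h
        · exact h
        · exact absurd h hnot
      rw [Sym2.eq_iff] at heq
      rcases heq with ⟨hv, hw⟩ | ⟨hv, hw⟩
      · exfalso
        have : j + 1 < T v := by have := hT0 v; omega
        have := hTmin v (j + 1) this
        rw [← hv] at hdeg
        omega
      · right
        have : T w ≤ j + 1 := hTle w (j + 1) (by rw [hw]; exact hdeg)
        have := hT0 v
        omega
  -- degree just before joining is at least t - 1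
  have hdegTm1 : ∀ v : Fin n, t - 1 ≤ dg (c (T v - 1)) v := by
    intro v
    have h1 : T v - 1 < m := by have := hT0 v; have := hTm v; omega
    obtain ⟨u, bb, hne, hins, -⟩ := addStep_center (hstep (T v - 1) h1)
    have hTv : T v - 1 + 1 = T v := by have := hT0 v; omega
    set A := Finset.univ.filter (fun w => (c (T v)).Adj v w) with hA
    set B := Finset.univ.filter (fun w => (c (T v - 1)).Adj v w) with hB
    have hsub : ∀ w ∈ A, w ∉ B → s(v, w) = s(u, bb) := by
      intro w hw hwB
      simp only [hA, Finset.mem_filter, Finset.mem_univ, true_and] at hw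
      have : s(v, w) ∈ (c (T v)).edgeSet := hw
      rw [← hTv, hins] at this
      rcases this with h | h
      · exact h
      · exact absurd (by simpa [hB] using (SimpleGraph.mem_edgeSet _).mp h) hwB
    have hsing : (A \ B).card ≤ 1 := by
      rw [Finset.card_le_one]
      intro a ha b hb
      rw [Finset.mem_sdiff] at ha hb
      have h1 := hsub a ha.1 ha.2
      have h2 := hsub b hb.1 hb.2
      rw [← h2] at h1
      exact (Sym2.congr_right.mp h1)
    have hcard : A.card ≤ (A \ B).card + B.card := Finset.card_le_card_sdiff_add_card
    have htA : t ≤ A.card := hTspec v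
    have hfin : t - 1 ≤ B.card := by omega
    exact hfin
  -- the key / rank machinery
  set key : Fin n → ℕ := fun v => T v * n + v.val with hkey
  have keyinj : Function.Injective key := by
    intro v w h
    have hv := v.isLt
    have hw := w.isLt
    have h1 : key v % n = v.val := by
      show (T v * n + v.val) % n = v.val
      rw [Nat.add_comm, Nat.add_mul_mod_self_right]
      exact Nat.mod_eq_of_lt hv
    have h2 : key w % n = w.val := by
      show (T w * n + w.val) % n = w.val
      rw [Nat.add_comm, Nat.add_mul_mod_self_right]
      exact Nat.mod_eq_of_lt hw
    have hval : v.val = w.val := by rw [← h1, ← h2, h]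
    exact Fin.ext hval
  have hkeylt : ∀ v w : Fin n, T w < T v → key w < key v := by
    intro v w hTwv
    have hw := w.isLt
    calc T w * n + w.val < T w * n + n := by omega
      _ = (T w + 1) * n := by ring
      _ ≤ T v * n := Nat.mul_le_mul_right n (by omega)
      _ ≤ key v := Nat.le_add_right _ _
  set pred : Fin n → Finset (Fin n) := fun v => Finset.univ.filter (fun w => key w < key v)
    with hpred
  set rank : Fin n → ℕ := fun v => (pred v).card with hrank
  -- per-vertex good neighbor sets
  set Sv : Fin n → Finset (Fin n) :=
    fun v => (Finset.univ.filter (fun w => (c (T v - 1)).Adj v w)) \ pred v with hSv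
  have hSvG : ∀ v, ∀ w ∈ Sv v, G.Adj v w ∧ key v < key w := by
    intro v w hw
    simp only [hSv, Finset.mem_sdiff, Finset.mem_filter, Finset.mem_univ, true_and,
      hpred, not_lt] at hw
    obtain ⟨hadj, hge⟩ := hw
    have hG : G.Adj v w := by
      rcases hL v w hadj with h | h
      · exact h
      · exact absurd (hkeylt v w h) (by omega)
    refine ⟨hG, ?_⟩
    have hne : w ≠ v := fun h => (hG.ne (h ▸ rfl)).elim
    have : key w ≠ key v := fun h => hne (keyinj h)
    omega
  have hSvcard : ∀ v, t - 1 - rank v ≤ (Sv v).card := by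
    intro v
    have h1 := Finset.le_card_sdiff (pred v)
      (Finset.univ.filter (fun w => (c (T v - 1)).Adj v w))
    have h2 : t - 1 ≤ (Finset.univ.filter (fun w => (c (T v - 1)).Adj v w)).card :=
      hdegTm1 v
    have h3 : rank v = (pred v).card := rfl
    have h4 : (Sv v).card =
        ((Finset.univ.filter (fun w => (c (T v - 1)).Adj v w)) \ pred v).card := rfl
    omega
  -- edge sets
  set Ev : Fin n → Finset (Sym2 (Fin n)) := fun v => (Sv v).image (fun w => s(v, w)) with hEv
  have hEvcard : ∀ v, (Sv v).card = (Ev v).card := by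
    intro v
    rw [hEv]
    rw [Finset.card_image_of_injOn]
    intro a _ b _ hab
    exact Sym2.congr_right.mp hab
  have hdisj : ∀ v w : Fin n, v ≠ w → Disjoint (Ev v) (Ev w) := by
    intro v w hvw
    rw [Finset.disjoint_left]
    intro e hev hew
    simp only [hEv, Finset.mem_image] at hev hew
    obtain ⟨a, ha, hae⟩ := hev
    obtain ⟨b, hb, hbe⟩ := hew
    have h1 := (hSvG v a ha).2
    have h2 := (hSvG w b hb).2
    rw [← hbe] at hae
    rw [Sym2.eq_iff] at hae
    rcases hae with ⟨h3, h4⟩ | ⟨h3, h4⟩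
    · exact hvw h3
    · rw [h3, h4] at h1; omega
  -- sum over biUnion
  have hbi : (Finset.univ.biUnion Ev).card = ∑ v, (Ev v).card :=
    Finset.card_biUnion (fun v _ w _ h => hdisj v w h)
  have hsubE : ↑(Finset.univ.biUnion Ev) ⊆ G.edgeSet := by
    intro e he
    simp only [Finset.coe_biUnion, Set.mem_iUnion, Finset.mem_coe] at he
    obtain ⟨v, -, hev⟩ := he
    simp only [hEv, Finset.mem_image] at hev
    obtain ⟨w, hw, rfl⟩ := hev
    exact (hSvG v w hw).1
  have hcardle : (Finset.univ.biUnion Ev).card ≤ G.edgeSet.ncard := by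
    rw [← Set.ncard_coe_finset]
    exact Set.ncard_le_ncard hsubE (Set.toFinite _)
  -- rank is injective with values < n
  have hranklt : ∀ v w : Fin n, key v < key w → rank v < rank w := by
    intro v w h
    apply Finset.card_lt_card
    rw [Finset.ssubset_iff_of_subset]
    · exact ⟨v, by simp [hpred, h], by simp [hpred]⟩
    · intro x hx
      simp only [hpred, Finset.mem_filter, Finset.mem_univ, true_and] at hx ⊢
      omega
  have hrankinj : Function.Injective rank := by
    intro v w h
    by_contra hne
    have : key v ≠ key w := fun hk => hne (keyinj hk)
    rcases lt_or_gt_of_ne this with h' | h'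
    · exact absurd h (Nat.ne_of_lt (hranklt v w h'))
    · exact absurd h.symm (Nat.ne_of_lt (hranklt w v h'))
  have hrankltn : ∀ v, rank v < n := by
    intro v
    have : pred v ⊆ Finset.univ.erase v := by
      intro x hx
      simp only [hpred, Finset.mem_filter, Finset.mem_univ, true_and] at hx
      simp only [Finset.mem_erase, Finset.mem_univ, and_true]
      intro h; rw [h] at hx; omega
    have h1 := Finset.card_le_card this
    rw [Finset.card_erase_of_mem (Finset.mem_univ v), Finset.card_univ, Fintype.card_fin]
      at h1
    have h2 : rank v = (pred v).card := rfl
    omega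
  have himg : Finset.univ.image rank = Finset.range n := by
    apply Finset.eq_of_subset_of_card_le
    · intro k hk
      simp only [Finset.mem_image] at hk
      obtain ⟨v, -, rfl⟩ := hk
      exact Finset.mem_range.mpr (hrankltn v)
    · rw [Finset.card_range, Finset.card_image_of_injective _ hrankinj, Finset.card_univ,
        Fintype.card_fin]
  -- final computation
  have hsum1 : ∑ k ∈ Finset.range n, (t - 1 - k) = ∑ v : Fin n, (t - 1 - rank v) := by
    rw [← himg, Finset.sum_image (fun a _ b _ h => hrankinj h)]
  have hsum2 : ∑ k ∈ Finset.range n, (t - 1 - k) = t.choose 2 := by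
    have hsub : Finset.range t ⊆ Finset.range n := by
      apply Finset.range_subset_range.mpr; omega
    rw [← Finset.sum_subset hsub (fun k _ hk => by
      simp only [Finset.mem_range, not_lt] at hk; omega)]
    have hg := Finset.sum_range_id_mul_two t
    have : ∑ k ∈ Finset.range t, (t - 1 - k) = ∑ k ∈ Finset.range t, k := by
      rw [← Finset.sum_range_reflect (fun i => i) t]
    rw [this, Nat.choose_two_right]
    omega
  calc t.choose 2 = ∑ v : Fin n, (t - 1 - rank v) := by rw [← hsum1, hsum2]
    _ ≤ ∑ v : Fin n, (Ev v).card :=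
        Finset.sum_le_sum (fun v _ => le_trans (hSvcard v) (le_of_eq (hEvcard v)))
    _ = (Finset.univ.biUnion Ev).card := hbi.symm
    _ ≤ G.edgeSet.ncard := hcardle

section Upper

variable (t n : ℕ)

/-- clique on the first `t` vertices of `Fin n` -/
def cliqueG : SimpleGraph (Fin n) where
  Adj v w := v ≠ w ∧ v.val < t ∧ w.val < t
  symm := by constructor; intro v w h; exact ⟨h.1.symm, h.2.2, h.2.1⟩
  loopless := by constructor; intro v h; exact h.1 rfl

variable {t n}

lemma cliqueK_card (htn : t ≤ n) :
    (Finset.univ.filter (fun w : Fin n => w.val < t)).card = t := by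
  have himg : (Finset.univ : Finset (Fin t)).image (Fin.castLE htn) =
      Finset.univ.filter (fun w : Fin n => w.val < t) := by
    ext x
    simp only [Finset.mem_image, Finset.mem_filter, Finset.mem_univ, true_and]
    constructor
    · rintro ⟨y, -, rfl⟩; exact y.isLt
    · intro hx; exact ⟨⟨x.val, hx⟩, Fin.ext rfl⟩
  rw [← himg, Finset.card_image_of_injective _ (Fin.castLE_injective htn),
    Finset.card_univ, Fintype.card_fin]

lemma cliqueG_ncard (ht : 1 ≤ t) (htn : t ≤ n) :
    (cliqueG t n).edgeSet.ncard = t.choose 2 := by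
  classical
  have hcard : ∀ v : Fin n, (cliqueG t n).degree v = if v.val < t then t - 1 else 0 := by
    intro v
    rw [SimpleGraph.degree, SimpleGraph.neighborFinset_eq_filter]
    by_cases hv : v.val < t
    · rw [if_pos hv]
      have : (Finset.univ.filter (fun w => (cliqueG t n).Adj v w)) =
          (Finset.univ.filter (fun w : Fin n => w.val < t)).erase v := by
        ext w
        simp only [Finset.mem_filter, Finset.mem_univ, true_and, Finset.mem_erase]
        constructor
        · rintro ⟨h1, -, h3⟩; exact ⟨Ne.symm h1, h3⟩
        · rintro ⟨h1, h2⟩; exact ⟨Ne.symm h1, hv, h2⟩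
      rw [this, Finset.card_erase_of_mem
        (by simp only [Finset.mem_filter, Finset.mem_univ, true_and]; exact hv),
        cliqueK_card htn]
    · rw [if_neg hv]
      rw [Finset.card_eq_zero]
      ext w
      simp only [Finset.mem_filter, Finset.mem_univ, true_and, Finset.notMem_empty,
        iff_false]
      rintro ⟨-, h2, -⟩
      exact hv h2
  have hsum := SimpleGraph.sum_degrees_eq_twice_card_edges (cliqueG t n)
  have hs2 : ∑ v : Fin n, (cliqueG t n).degree v = t * (t - 1) := by
    rw [Finset.sum_congr rfl (fun v _ => hcard v), ← Finset.sum_filter,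
      Finset.sum_const, smul_eq_mul, cliqueK_card htn]
  have hE : (cliqueG t n).edgeSet.ncard = (cliqueG t n).edgeFinset.card := by
    rw [← Set.ncard_coe_finset, SimpleGraph.coe_edgeFinset]
  rw [hE, Nat.choose_two_right]
  omega

lemma cliqueG_free (ht : 1 ≤ t) (htn : t ≤ n) :
    ¬ ContainsCopy (completeBipartiteGraph (Fin 1) (Fin t)) (cliqueG t n) := by
  rw [containsCopy_iff_dg]
  rintro ⟨v, hv⟩
  by_cases hvt : v.val < t
  · have hsub : Finset.univ.filter (fun w => (cliqueG t n).Adj v w) ⊆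
        (Finset.univ.filter (fun w : Fin n => w.val < t)).erase v := by
      intro w hw
      simp only [Finset.mem_filter, Finset.mem_univ, true_and] at hw
      simp only [Finset.mem_erase, Finset.mem_filter, Finset.mem_univ, true_and]
      exact ⟨Ne.symm hw.1, hw.2.2⟩
    have h1 := Finset.card_le_card hsub
    have hmem : v ∈ Finset.univ.filter (fun w : Fin n => w.val < t) := by
      simp only [Finset.mem_filter, Finset.mem_univ, true_and]; exact hvt
    have h2 := Finset.card_erase_of_mem hmem
    have h3 := cliqueK_card (n := n) htn
    have hv' : t ≤ (Finset.univ.filter (fun w => (cliqueG t n).Adj v w)).card := hv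
    omega
  · have hemp : Finset.univ.filter (fun w => (cliqueG t n).Adj v w) = ∅ := by
      ext w
      simp only [Finset.mem_filter, Finset.mem_univ, true_and, Finset.notMem_empty,
        iff_false]
      rintro ⟨-, h2, -⟩
      exact hvt h2
    have hv' : t ≤ (Finset.univ.filter (fun w => (cliqueG t n).Adj v w)).card := hv
    rw [hemp] at hv'
    simp at hv'
    omega

end Upper

section Chain

variable {t n : ℕ}

local notation "F" => completeBipartiteGraph (Fin 1) (Fin t)

lemma mkstep (ht : 1 ≤ t) (H : SimpleGraph (Fin n)) (a b : Fin n) (s : Finset (Fin n))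
    (hab : a ≠ b) (hnadj : ¬ H.Adj a b) (hcard : s.card = t - 1) (hbs : b ∉ s)
    (hadj : ∀ w ∈ s, H.Adj a w) :
    ∃ H' : SimpleGraph (Fin n), AddStep F H H' ∧ H ≤ H' ∧
      H'.edgeSet = insert s(a, b) H.edgeSet := by
  classical
  set H' : SimpleGraph (Fin n) := H ⊔ SimpleGraph.fromEdgeSet {s(a, b)} with hH'
  have hedge : H'.edgeSet = insert s(a, b) H.edgeSet := by
    rw [hH', SimpleGraph.edgeSet_sup, SimpleGraph.edgeSet_fromEdgeSet]
    have : ({s(a, b)} : Set (Sym2 (Fin n))) \ Sym2.diagSet = {s(a, b)} := by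
      ext e
      simp only [Set.mem_diff, Set.mem_singleton_iff, Set.mem_setOf_eq, Sym2.mem_diagSet]
      constructor
      · exact fun h => h.1
      · rintro rfl
        exact ⟨rfl, fun hd => hab (Sym2.mk_isDiag_iff.mp hd)⟩
    rw [this, Set.union_comm, ← Set.insert_eq]
  have hle : H ≤ H' := le_sup_left
  have hadjb : H'.Adj a b := by
    rw [hH']
    exact Or.inr ⟨rfl, hab⟩
  refine ⟨H', ⟨s(a, b), ?_, hedge, ?_⟩, hle, hedge⟩
  · rw [SimpleGraph.mem_edgeSet]; exact hnadj
  · have hcard' : (insert b s).card = t := by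
      rw [Finset.card_insert_of_notMem hbs, hcard]; omega
    have hadj' : ∀ w ∈ insert b s, H'.Adj a w := by
      intro w hw
      rcases Finset.mem_insert.mp hw with rfl | hw
      · exact hadjb
      · exact hle (hadj w hw)
    obtain ⟨f, hf, hf0, hsurj⟩ := star_embed H' a (insert b s) hcard' hadj'
    obtain ⟨i, hi⟩ := hsurj b (Finset.mem_insert_self b s)
    refine ⟨f, hf, Sum.inl 0, Sum.inr i, by simp, ?_⟩
    rw [hf0, hi]

lemma addable (ht : 1 ≤ t) (htn : t ≤ n) (H : SimpleGraph (Fin n))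
    (hGH : cliqueG t n ≤ H) (hne : H ≠ ⊤) :
    ∃ (a b : Fin n) (s : Finset (Fin n)), a ≠ b ∧ ¬ H.Adj a b ∧ s.card = t - 1 ∧
      b ∉ s ∧ ∀ w ∈ s, H.Adj a w := by
  classical
  have hmiss : ∃ a b : Fin n, a ≠ b ∧ ¬ H.Adj a b := by
    by_contra h
    push_neg at h
    apply hne
    ext a b
    simp only [SimpleGraph.top_adj]
    exact ⟨fun h' => h'.ne, fun h' => h a b h'⟩
  by_cases hcase : ∃ a b : Fin n, a ≠ b ∧ ¬ H.Adj a b ∧ a.val < t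
  · obtain ⟨a, b, hab, hnadj, hat⟩ := hcase
    have hbt : ¬ b.val < t := by
      intro hbt
      exact hnadj (hGH ⟨hab, hat, hbt⟩)
    refine ⟨a, b, (Finset.univ.filter (fun w : Fin n => w.val < t)).erase a, hab, hnadj,
      ?_, ?_, ?_⟩
    · rw [Finset.card_erase_of_mem (by simp [hat]), cliqueK_card htn]
    · simp only [Finset.mem_erase, Finset.mem_filter, Finset.mem_univ, true_and]
      tauto
    · intro w hw
      simp only [Finset.mem_erase, Finset.mem_filter, Finset.mem_univ, true_and] at hw
      exact hGH ⟨Ne.symm hw.1, hat, hw.2⟩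
  · push_neg at hcase
    obtain ⟨a, b, hab, hnadj⟩ := hmiss
    have hadjall : ∀ w : Fin n, w.val < t → H.Adj a w := by
      intro w hwt
      by_contra hnw
      have hwa : w ≠ a := by
        intro h
        rw [h] at hwt
        have := hcase a b hab hnadj
        omega
      have := hcase w a hwa (fun h => hnw h.symm)
      omega
    have hbt : ¬ b.val < t := by
      intro h
      have := hcase b a (Ne.symm hab) (fun h' => hnadj h'.symm)
      omega
    obtain ⟨s, hs, hcard⟩ := Finset.exists_subset_card_eq
      (show t - 1 ≤ (Finset.univ.filter (fun w : Fin n => w.val < t)).card by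
        rw [cliqueK_card htn]; omega)
    refine ⟨a, b, s, hab, hnadj, hcard, ?_, ?_⟩
    · intro hb
      have := hs hb
      simp only [Finset.mem_filter, Finset.mem_univ, true_and] at this
      exact hbt this
    · intro w hw
      have := hs hw
      simp only [Finset.mem_filter, Finset.mem_univ, true_and] at this
      exact hadjall w this

lemma chain_main (ht : 1 ≤ t) (htn : t ≤ n) :
    ∀ (N : ℕ) (H : SimpleGraph (Fin n)), cliqueG t n ≤ H →
      ((⊤ : SimpleGraph (Fin n)).edgeFinset \ H.edgeFinset).card = N →
      ∃ (m : ℕ) (c : ℕ → SimpleGraph (Fin n)), c 0 = H ∧ c m = ⊤ ∧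
        ∀ i < m, AddStep F (c i) (c (i + 1)) := by
  classical
  intro N
  induction N using Nat.strong_induction_on with
  | _ N ih =>
    intro H hGH hN
    by_cases htop : H = ⊤
    · exact ⟨0, fun _ => H, rfl, htop, fun i hi => absurd hi (Nat.not_lt_zero i)⟩
    · obtain ⟨a, b, s, hab, hnadj, hcard, hbs, hadj⟩ := addable ht htn H hGH htop
      obtain ⟨H', hstep, hle, hedge⟩ := mkstep ht H a b s hab hnadj hcard hbs hadj
      have hmemtop : s(a, b) ∈ (⊤ : SimpleGraph (Fin n)).edgeFinset := by
        rw [SimpleGraph.mem_edgeFinset, SimpleGraph.mem_edgeSet]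
        exact hab
      have hmemH : s(a, b) ∉ H.edgeFinset := by
        rw [SimpleGraph.mem_edgeFinset, SimpleGraph.mem_edgeSet]
        exact hnadj
      have hH'fin : H'.edgeFinset = insert s(a, b) H.edgeFinset := by
        ext e
        rw [SimpleGraph.mem_edgeFinset, hedge]
        simp [SimpleGraph.mem_edgeFinset]
      have hdiff : (⊤ : SimpleGraph (Fin n)).edgeFinset \ H'.edgeFinset =
          ((⊤ : SimpleGraph (Fin n)).edgeFinset \ H.edgeFinset).erase s(a, b) := by
        rw [hH'fin]
        ext e
        simp only [Finset.mem_sdiff, Finset.mem_insert, Finset.mem_erase]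
        tauto
      have hNpos : s(a, b) ∈ (⊤ : SimpleGraph (Fin n)).edgeFinset \ H.edgeFinset :=
        Finset.mem_sdiff.mpr ⟨hmemtop, hmemH⟩
      have hcard' : ((⊤ : SimpleGraph (Fin n)).edgeFinset \ H'.edgeFinset).card = N - 1 := by
        rw [hdiff, Finset.card_erase_of_mem hNpos, hN]
      have hN1 : 1 ≤ N := by
        rw [← hN]
        exact Finset.card_pos.mpr ⟨_, hNpos⟩ 
      have hGH' : cliqueG t n ≤ H' := le_trans hGH hle
      obtain ⟨m, c, h0, hm, hsteps⟩ := ih (N - 1) (by omega) H' hGH' hcard'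
      refine ⟨m + 1, fun i => if i = 0 then H else c (i - 1), by simp, ?_, ?_⟩
      · simp only [Nat.succ_ne_zero, if_false, Nat.add_sub_cancel]
        exact hm
      · intro i hi
        rcases Nat.eq_zero_or_pos i with rfl | hpos
        · simp only [if_pos rfl, Nat.one_ne_zero, if_false]
          rw [show (1 : ℕ) - 1 = 0 from rfl, h0]
          exact hstep
        · have h1 : i ≠ 0 := by omega
          have h2 : i + 1 ≠ 0 := by omega
          simp only [if_neg h1, if_neg h2]
          have : i + 1 - 1 = (i - 1) + 1 := by omega
          rw [this]
          exact hsteps (i - 1) (by omega)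

end Chain

/-- For every `n > t+1` with `t ≥ 1`, `wsat(n, K_{1,t}) = C(t,2)`. -/
theorem wsat_star (t n : ℕ) (ht : 1 ≤ t) (hn : t + 1 < n) :
    wsat n (completeBipartiteGraph (Fin 1) (Fin t)) = t.choose 2 := by
  have htn : t ≤ n := by omega
  have hmem : t.choose 2 ∈ {m | ∃ G : SimpleGraph (Fin n),
      IsWeaklySaturated (completeBipartiteGraph (Fin 1) (Fin t)) G ∧
      G.edgeSet.ncard = m} := by
    refine ⟨cliqueG t n, ⟨cliqueG_free ht htn, ?_⟩, cliqueG_ncard ht htn⟩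
    exact chain_main ht htn _ (cliqueG t n) le_rfl rfl
  have hlow : ∀ m' ∈ {m | ∃ G : SimpleGraph (Fin n),
      IsWeaklySaturated (completeBipartiteGraph (Fin 1) (Fin t)) G ∧
      G.edgeSet.ncard = m}, t.choose 2 ≤ m' := by
    rintro m' ⟨G, hws, rfl⟩
    exact lower_bound ht hn G hws
  have h1 : wsat n (completeBipartiteGraph (Fin 1) (Fin t)) ≤ t.choose 2 :=
    Nat.sInf_le hmem
  have h2 : t.choose 2 ≤ wsat n (completeBipartiteGraph (Fin 1) (Fin t)) :=
    hlow _ (Nat.sInf_mem ⟨_, hmem⟩)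
  omega
end

section
/- Let s > 2. The graph on 2s+1 vertices formed by a path P_1 on s−1 vertices, a disjoint path P_2 on s−2 vertices, and a 4-cycle (a,b,c,d) disjoint from both paths, together with all edges from a to the vertices of P_1 and all edges from b to the vertices of P_2, is erasable and has exactly 4s−4 edges. -/
open SimpleGraph
/-- One step of the erase process with parameters `s`, `t`: delete an edge `e` that is
the unique edge between a set `V₁` of size `s` and a set `V₂` of size `t`, where
`V₁`, `V₂` and one extra vertex `v` partition the vertex set. -/
def EraseStep (s t : ℕ) {V : Type*} (G G' : SimpleGraph V) : Prop :=
  ∃ e ∈ G.edgeSet, G'.edgeSet = G.edgeSet \ {e} ∧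
    ∃ (V1 V2 : Set V) (v : V),
      Disjoint V1 V2 ∧ v ∉ V1 ∧ v ∉ V2 ∧ V1 ∪ V2 ∪ {v} = Set.univ ∧
      V1.ncard = s ∧ V2.ncard = t ∧
      (∃ x ∈ V1, ∃ y ∈ V2, e = s(x, y)) ∧
      ∀ x ∈ V1, ∀ y ∈ V2, G.Adj x y → s(x, y) = e

/-- `G` is erasable (with parameters `s`, `t`): its edges can be deleted one at a time
by erase steps until no edge remains. -/
def Erasable (s t : ℕ) {V : Type*} (G : SimpleGraph V) : Prop :=
  ∃ (m : ℕ) (c : ℕ → SimpleGraph V), c 0 = G ∧ c m = ⊥ ∧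
    ∀ i < m, EraseStep s t (c i) (c (i + 1))

/-- The graph on `2s+1` vertices made of a path on `s−1` vertices, a disjoint path on
`s−2` vertices, and a `4`-cycle `(a,b,c,d)` (the vertices `0,1,2,3` of `Fin 4`,
with `a = 0`, `b = 1`, `c = 2`, `d = 3`), where `a` is joined to all vertices of the
first path and `b` to all vertices of the second path. -/
def ConstrGraph (s : ℕ) : SimpleGraph (Fin (s - 1) ⊕ Fin (s - 2) ⊕ Fin 4) :=
  SimpleGraph.fromRel fun x y =>
    match x, y with
    | Sum.inl i, Sum.inl j => (i : ℕ) + 1 = j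
    | Sum.inr (Sum.inl i), Sum.inr (Sum.inl j) => (i : ℕ) + 1 = j
    | Sum.inr (Sum.inr k), Sum.inr (Sum.inr l) =>
        ((k : ℕ), (l : ℕ)) ∈ [(0, 1), (1, 2), (2, 3), (3, 0)]
    | Sum.inr (Sum.inr k), Sum.inl _ => (k : ℕ) = 0
    | Sum.inr (Sum.inr k), Sum.inr (Sum.inl _) => (k : ℕ) = 1
    | _, _ => False

namespace ErasableAux
abbrev VV (k : ℕ) := Fin (k + 2) ⊕ Fin (k + 1) ⊕ Fin 4
variable {k : ℕ}
def Rel (c1 c2 c3 c4 : Bool) (sa pa sb pb : ℕ) : VV k → VV k → Prop := fun x y =>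
  match x, y with
  | Sum.inl i, Sum.inl j => (i : ℕ) + 1 = j ∧ (j : ℕ) < pa
  | Sum.inr (Sum.inl i), Sum.inr (Sum.inl j) => (i : ℕ) + 1 = j ∧ (j : ℕ) < pb
  | Sum.inr (Sum.inr m), Sum.inl i => (m : ℕ) = 0 ∧ (i : ℕ) < sa
  | Sum.inr (Sum.inr m), Sum.inr (Sum.inl j) => (m : ℕ) = 1 ∧ (j : ℕ) < sb
  | Sum.inr (Sum.inr m), Sum.inr (Sum.inr l) =>
      (c1 = true ∧ (m : ℕ) = 0 ∧ (l : ℕ) = 1) ∨ (c2 = true ∧ (m : ℕ) = 1 ∧ (l : ℕ) = 2) ∨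
      (c3 = true ∧ (m : ℕ) = 2 ∧ (l : ℕ) = 3) ∨ (c4 = true ∧ (m : ℕ) = 3 ∧ (l : ℕ) = 0)
  | _, _ => False
def GG (k : ℕ) (c1 c2 c3 c4 : Bool) (sa pa sb pb : ℕ) : SimpleGraph (VV k) :=
  SimpleGraph.fromRel (Rel c1 c2 c3 c4 sa pa sb pb)
section adj
variable {c1 c2 c3 c4 : Bool} {sa pa sb pb : ℕ}
@[simp] lemma adj_LL {i j : Fin (k+2)} :
    (GG k c1 c2 c3 c4 sa pa sb pb).Adj (Sum.inl i) (Sum.inl j) ↔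
      ((i : ℕ) + 1 = j ∧ (j : ℕ) < pa) ∨ ((j : ℕ) + 1 = i ∧ (i : ℕ) < pa) := by
  simp [GG, fromRel_adj, Rel, Fin.ext_iff]; omega
@[simp] lemma adj_QQ {i j : Fin (k+1)} :
    (GG k c1 c2 c3 c4 sa pa sb pb).Adj (Sum.inr (Sum.inl i)) (Sum.inr (Sum.inl j)) ↔
      ((i : ℕ) + 1 = j ∧ (j : ℕ) < pb) ∨ ((j : ℕ) + 1 = i ∧ (i : ℕ) < pb) := by
  simp [GG, fromRel_adj, Rel, Fin.ext_iff]; omega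
@[simp] lemma adj_LQ {i : Fin (k+2)} {j : Fin (k+1)} :
    ¬ (GG k c1 c2 c3 c4 sa pa sb pb).Adj (Sum.inl i) (Sum.inr (Sum.inl j)) := by
  simp [GG, fromRel_adj, Rel]
@[simp] lemma adj_QL {i : Fin (k+2)} {j : Fin (k+1)} :
    ¬ (GG k c1 c2 c3 c4 sa pa sb pb).Adj (Sum.inr (Sum.inl j)) (Sum.inl i) := by
  simp [GG, fromRel_adj, Rel]
@[simp] lemma adj_FL {m : Fin 4} {i : Fin (k+2)} :
    (GG k c1 c2 c3 c4 sa pa sb pb).Adj (Sum.inr (Sum.inr m)) (Sum.inl i) ↔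
      (m : ℕ) = 0 ∧ (i : ℕ) < sa := by
  simp [GG, fromRel_adj, Rel]
@[simp] lemma adj_LF {m : Fin 4} {i : Fin (k+2)} :
    (GG k c1 c2 c3 c4 sa pa sb pb).Adj (Sum.inl i) (Sum.inr (Sum.inr m)) ↔
      (m : ℕ) = 0 ∧ (i : ℕ) < sa := by
  simp [GG, fromRel_adj, Rel]
@[simp] lemma adj_FQ {m : Fin 4} {j : Fin (k+1)} :
    (GG k c1 c2 c3 c4 sa pa sb pb).Adj (Sum.inr (Sum.inr m)) (Sum.inr (Sum.inl j)) ↔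
      (m : ℕ) = 1 ∧ (j : ℕ) < sb := by
  simp [GG, fromRel_adj, Rel]
@[simp] lemma adj_QF {m : Fin 4} {j : Fin (k+1)} :
    (GG k c1 c2 c3 c4 sa pa sb pb).Adj (Sum.inr (Sum.inl j)) (Sum.inr (Sum.inr m)) ↔
      (m : ℕ) = 1 ∧ (j : ℕ) < sb := by
  simp [GG, fromRel_adj, Rel]
@[simp] lemma adj_FF {m l : Fin 4} :
    (GG k c1 c2 c3 c4 sa pa sb pb).Adj (Sum.inr (Sum.inr m)) (Sum.inr (Sum.inr l)) ↔
      (c1 = true ∧ ((m:ℕ) = 0 ∧ (l:ℕ) = 1 ∨ (m:ℕ) = 1 ∧ (l:ℕ) = 0)) ∨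
      (c2 = true ∧ ((m:ℕ) = 1 ∧ (l:ℕ) = 2 ∨ (m:ℕ) = 2 ∧ (l:ℕ) = 1)) ∨
      (c3 = true ∧ ((m:ℕ) = 2 ∧ (l:ℕ) = 3 ∨ (m:ℕ) = 3 ∧ (l:ℕ) = 2)) ∨
      (c4 = true ∧ ((m:ℕ) = 3 ∧ (l:ℕ) = 0 ∨ (m:ℕ) = 0 ∧ (l:ℕ) = 3)) := by
  simp only [GG, fromRel_adj, Rel, ne_eq, Sum.inr.injEq, Fin.ext_iff]
  cases c1 <;> cases c2 <;> cases c3 <;> cases c4 <;> simp <;> omega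
end adj

def RL (k : ℕ) : Set (VV k) := Set.range (fun i : Fin (k+2) => (Sum.inl i : VV k))
def RQ (k : ℕ) : Set (VV k) := Set.range (fun j : Fin (k+1) => (Sum.inr (Sum.inl j) : VV k))

@[simp] lemma mem_RL_inl {i : Fin (k+2)} : (Sum.inl i : VV k) ∈ RL k := ⟨i, rfl⟩
@[simp] lemma not_mem_RL {x} : (Sum.inr x : VV k) ∉ RL k := by rintro ⟨i, h⟩; simp at h
@[simp] lemma mem_RQ_q {j : Fin (k+1)} : (Sum.inr (Sum.inl j) : VV k) ∈ RQ k := ⟨j, rfl⟩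
@[simp] lemma not_mem_RQ_inl {i : Fin (k+2)} : (Sum.inl i : VV k) ∉ RQ k := by
  rintro ⟨j, h⟩; simp at h
@[simp] lemma not_mem_RQ_F {m : Fin 4} : (Sum.inr (Sum.inr m) : VV k) ∉ RQ k := by
  rintro ⟨j, h⟩; simp at h

lemma ncard_RL : (RL k).ncard = k + 2 := by
  rw [RL, ← Set.image_univ, Set.ncard_image_of_injective _ (fun x y h => by simpa using h),
    Set.ncard_univ]
  simp
lemma ncard_RQ : (RQ k).ncard = k + 1 := by
  rw [RQ, ← Set.image_univ, Set.ncard_image_of_injective _ (fun x y h => by simpa using h),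
    Set.ncard_univ]
  simp

lemma edgeSet_eq_of {V : Type*} (G G' : SimpleGraph V) (e : Sym2 V)
    (h : ∀ x y, G'.Adj x y ↔ G.Adj x y ∧ s(x,y) ≠ e) : G'.edgeSet = G.edgeSet \ {e} := by
  ext z
  induction z using Sym2.ind with
  | _ x y => simp [h x y]

lemma stepS1 : EraseStep (k+3) (k+3)
    (GG k true true true true (k+2) (k+2) (k+1) (k+1))
    (GG k true true false true (k+2) (k+2) (k+1) (k+1)) := by
  refine ⟨s(Sum.inr (Sum.inr 2), Sum.inr (Sum.inr 3)), ?_, ?_,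
    insert (Sum.inr (Sum.inr 3)) (RL k),
    insert (Sum.inr (Sum.inr 1)) (insert (Sum.inr (Sum.inr 2)) (RQ k)),
    Sum.inr (Sum.inr 0), ?_, ?_, ?_, ?_, ?_, ?_, ?_, ?_⟩
  · simp <;> decide
  · apply edgeSet_eq_of
    rintro (i | j | m) (i' | j' | m') <;> simp [Sym2.eq_iff] <;> omega
  · rw [Set.disjoint_left]
    rintro z (rfl | ⟨i, rfl⟩) hz <;> simp_all <;> omega
  · simp
  · simp
  · ext z
    rcases z with i | j | m
    · simp [RL]
    · simp [RQ]
    · simp [RL, RQ]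
      omega
  · rw [Set.ncard_insert_of_notMem (by simp), ncard_RL]
  · rw [Set.ncard_insert_of_notMem (by simp), Set.ncard_insert_of_notMem (by simp),
      ncard_RQ]
  · exact ⟨Sum.inr (Sum.inr 3), by simp, Sum.inr (Sum.inr 2), by simp, by rw [Sym2.eq_swap]⟩
  · rintro x (rfl | ⟨i, rfl⟩) y (rfl | rfl | ⟨j, rfl⟩) hadj <;>
      simp_all [Sym2.eq_iff] <;> omega

lemma stepS2 : EraseStep (k+3) (k+3)
    (GG k true true false true (k+2) (k+2) (k+1) (k+1))
    (GG k true true false false (k+2) (k+2) (k+1) (k+1)) := by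
  refine ⟨s(Sum.inr (Sum.inr 0), Sum.inr (Sum.inr 3)), ?_, ?_,
    insert (Sum.inr (Sum.inr 0)) (RL k),
    insert (Sum.inr (Sum.inr 2)) (insert (Sum.inr (Sum.inr 3)) (RQ k)),
    Sum.inr (Sum.inr 1), ?_, ?_, ?_, ?_, ?_, ?_, ?_, ?_⟩
  · simp <;> decide
  · apply edgeSet_eq_of
    rintro (i | j | m) (i' | j' | m') <;> simp [Sym2.eq_iff] <;> omega
  · rw [Set.disjoint_left]
    rintro z (rfl | ⟨i, rfl⟩) hz <;> simp_all <;> omega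
  · simp
  · simp
  · ext z
    rcases z with i | j | m
    · simp [RL]
    · simp [RQ]
    · simp [RL, RQ]
      omega
  · rw [Set.ncard_insert_of_notMem (by simp), ncard_RL]
  · rw [Set.ncard_insert_of_notMem (by simp), Set.ncard_insert_of_notMem (by simp),
      ncard_RQ]
  · exact ⟨Sum.inr (Sum.inr 0), by simp, Sum.inr (Sum.inr 3), by simp, rfl⟩
  · rintro x (rfl | ⟨i, rfl⟩) y (rfl | rfl | ⟨j, rfl⟩) hadj <;>
      simp_all [Sym2.eq_iff] <;> omega

lemma stepS3 : EraseStep (k+3) (k+3)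
    (GG k true true false false (k+2) (k+2) (k+1) (k+1))
    (GG k true false false false (k+2) (k+2) (k+1) (k+1)) := by
  refine ⟨s(Sum.inr (Sum.inr 2), Sum.inr (Sum.inr 1)), ?_, ?_,
    insert (Sum.inr (Sum.inr 2)) (RL k),
    insert (Sum.inr (Sum.inr 1)) (insert (Sum.inr (Sum.inr 3)) (RQ k)),
    Sum.inr (Sum.inr 0), ?_, ?_, ?_, ?_, ?_, ?_, ?_, ?_⟩
  · simp <;> decide
  · apply edgeSet_eq_of
    rintro (i | j | m) (i' | j' | m') <;> simp [Sym2.eq_iff] <;> omega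
  · rw [Set.disjoint_left]
    rintro z (rfl | ⟨i, rfl⟩) hz <;> simp_all <;> omega
  · simp
  · simp
  · ext z
    rcases z with i | j | m
    · simp [RL]
    · simp [RQ]
    · simp [RL, RQ]
      omega
  · rw [Set.ncard_insert_of_notMem (by simp), ncard_RL]
  · rw [Set.ncard_insert_of_notMem (by simp), Set.ncard_insert_of_notMem (by simp),
      ncard_RQ]
  · exact ⟨Sum.inr (Sum.inr 2), by simp, Sum.inr (Sum.inr 1), by simp, rfl⟩
  · rintro x (rfl | ⟨i, rfl⟩) y (rfl | rfl | ⟨j, rfl⟩) hadj <;>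
      simp_all [Sym2.eq_iff] <;> omega

lemma stepS4 : EraseStep (k+3) (k+3)
    (GG k true false false false (k+2) (k+2) (k+1) (k+1))
    (GG k false false false false (k+2) (k+2) (k+1) (k+1)) := by
  refine ⟨s(Sum.inr (Sum.inr 0), Sum.inr (Sum.inr 1)), ?_, ?_,
    insert (Sum.inr (Sum.inr 0)) (RL k),
    insert (Sum.inr (Sum.inr 1)) (insert (Sum.inr (Sum.inr 3)) (RQ k)),
    Sum.inr (Sum.inr 2), ?_, ?_, ?_, ?_, ?_, ?_, ?_, ?_⟩
  · simp <;> decide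
  · apply edgeSet_eq_of
    rintro (i | j | m) (i' | j' | m') <;> simp [Sym2.eq_iff] <;> omega
  · rw [Set.disjoint_left]
    rintro z (rfl | ⟨i, rfl⟩) hz <;> simp_all <;> omega
  · simp
  · simp
  · ext z
    rcases z with i | j | m
    · simp [RL]
    · simp [RQ]
    · simp [RL, RQ]
      omega
  · rw [Set.ncard_insert_of_notMem (by simp), ncard_RL]
  · rw [Set.ncard_insert_of_notMem (by simp), Set.ncard_insert_of_notMem (by simp),
      ncard_RQ]
  · exact ⟨Sum.inr (Sum.inr 0), by simp, Sum.inr (Sum.inr 1), by simp, rfl⟩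
  · rintro x (rfl | ⟨i, rfl⟩) y (rfl | rfl | ⟨j, rfl⟩) hadj <;>
      simp_all [Sym2.eq_iff] <;> omega

lemma stepSA1 (r : ℕ) (h1 : 1 ≤ r) (h2 : r ≤ k+1) : EraseStep (k+3) (k+3)
    (GG k false false false false (r+1) (r+1) (k+1) (k+1))
    (GG k false false false false (r+1) r (k+1) (k+1)) := by
  refine ⟨s(Sum.inl ⟨r-1, by omega⟩, Sum.inl ⟨r, by omega⟩), ?_, ?_,
    insert (Sum.inr (Sum.inr 2)) (insert (Sum.inr (Sum.inr 3))
      (RL k \ {Sum.inl ⟨r, by omega⟩})),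
    insert (Sum.inr (Sum.inr 1)) (insert (Sum.inl ⟨r, by omega⟩) (RQ k)),
    Sum.inr (Sum.inr 0), ?_, ?_, ?_, ?_, ?_, ?_, ?_, ?_⟩
  · simp
    omega
  · apply edgeSet_eq_of
    rintro (i | j | m) (i' | j' | m') <;> simp [Sym2.eq_iff, Fin.ext_iff, -Fin.val_eq_zero_iff] <;> omega
  · rw [Set.disjoint_left]
    rintro z (rfl | rfl | ⟨⟨i, rfl⟩, hne⟩) hz <;> simp_all [Fin.ext_iff] <;> omega
  · simp
  · simp
  · ext z
    rcases z with i | j | m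
    · simp [RL, Fin.ext_iff]
      omega
    · simp [RQ]
    · simp [RL, RQ]
      omega
  · rw [Set.ncard_insert_of_notMem (by simp), Set.ncard_insert_of_notMem (by simp),
      Set.ncard_diff_singleton_of_mem mem_RL_inl, ncard_RL]
    omega
  · rw [Set.ncard_insert_of_notMem (by simp), Set.ncard_insert_of_notMem (by simp),
      ncard_RQ]
  · exact ⟨Sum.inl ⟨r-1, by omega⟩, by simp [Fin.ext_iff]; omega,
      Sum.inl ⟨r, by omega⟩, by simp, rfl⟩
  · rintro x (rfl | rfl | ⟨⟨i, rfl⟩, hne⟩) y (rfl | rfl | ⟨j, rfl⟩) hadj <;>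
      simp_all [Sym2.eq_iff, Fin.ext_iff] <;> omega

lemma stepSA2 (r : ℕ) (h2 : r ≤ k+1) : EraseStep (k+3) (k+3)
    (GG k false false false false (r+1) r (k+1) (k+1))
    (GG k false false false false r r (k+1) (k+1)) := by
  refine ⟨s(Sum.inr (Sum.inr 0), Sum.inl ⟨r, by omega⟩), ?_, ?_,
    insert (Sum.inr (Sum.inr 0)) (insert (Sum.inr (Sum.inr 2))
      (RL k \ {Sum.inl ⟨r, by omega⟩})),
    insert (Sum.inr (Sum.inr 1)) (insert (Sum.inl ⟨r, by omega⟩) (RQ k)),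
    Sum.inr (Sum.inr 3), ?_, ?_, ?_, ?_, ?_, ?_, ?_, ?_⟩
  · simp
  · apply edgeSet_eq_of
    rintro (i | j | m) (i' | j' | m') <;> simp [Sym2.eq_iff, Fin.ext_iff, -Fin.val_eq_zero_iff] <;> omega
  · rw [Set.disjoint_left]
    rintro z (rfl | rfl | ⟨⟨i, rfl⟩, hne⟩) hz <;> simp_all [Fin.ext_iff] <;> omega
  · simp
  · simp
  · ext z
    rcases z with i | j | m
    · simp [RL, Fin.ext_iff]
      omega
    · simp [RQ]
    · simp [RL, RQ]
      omega
  · rw [Set.ncard_insert_of_notMem (by simp), Set.ncard_insert_of_notMem (by simp),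
      Set.ncard_diff_singleton_of_mem mem_RL_inl, ncard_RL]
    omega
  · rw [Set.ncard_insert_of_notMem (by simp), Set.ncard_insert_of_notMem (by simp),
      ncard_RQ]
  · exact ⟨Sum.inr (Sum.inr 0), by simp, Sum.inl ⟨r, by omega⟩, by simp, rfl⟩
  · rintro x (rfl | rfl | ⟨⟨i, rfl⟩, hne⟩) y (rfl | rfl | ⟨j, rfl⟩) hadj <;>
      simp_all [Sym2.eq_iff, Fin.ext_iff] <;> omega

lemma stepSB1 (r : ℕ) (h1 : 1 ≤ r) (h2 : r ≤ k) : EraseStep (k+3) (k+3)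
    (GG k false false false false 0 0 (r+1) (r+1))
    (GG k false false false false 0 0 (r+1) r) := by
  refine ⟨s(Sum.inr (Sum.inl ⟨r-1, by omega⟩), Sum.inr (Sum.inl ⟨r, by omega⟩)), ?_, ?_,
    insert (Sum.inr (Sum.inr 0)) (insert (Sum.inr (Sum.inr 2)) (insert (Sum.inr (Sum.inr 3))
      (RQ k \ {Sum.inr (Sum.inl ⟨r, by omega⟩)}))),
    insert (Sum.inr (Sum.inl ⟨r, by omega⟩)) (RL k),
    Sum.inr (Sum.inr 1), ?_, ?_, ?_, ?_, ?_, ?_, ?_, ?_⟩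
  · simp
    omega
  · apply edgeSet_eq_of
    rintro (i | j | m) (i' | j' | m') <;> simp [Sym2.eq_iff, Fin.ext_iff, -Fin.val_eq_zero_iff] <;> omega
  · rw [Set.disjoint_left]
    rintro z (rfl | rfl | rfl | ⟨⟨j, rfl⟩, hne⟩) hz <;> simp_all [Fin.ext_iff] <;> omega
  · simp
  · simp
  · ext z
    rcases z with i | j | m
    · simp [RL]
    · simp [RQ, Fin.ext_iff]
      omega
    · simp [RL, RQ]
      omega
  · rw [Set.ncard_insert_of_notMem (by simp), Set.ncard_insert_of_notMem (by simp),
      Set.ncard_insert_of_notMem (by simp), Set.ncard_diff_singleton_of_mem mem_RQ_q, ncard_RQ]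
    omega
  · rw [Set.ncard_insert_of_notMem (by simp), ncard_RL]
  · exact ⟨Sum.inr (Sum.inl ⟨r-1, by omega⟩), by simp [Fin.ext_iff]; omega,
      Sum.inr (Sum.inl ⟨r, by omega⟩), by simp, rfl⟩
  · rintro x (rfl | rfl | rfl | ⟨⟨j, rfl⟩, hne⟩) y (rfl | ⟨i, rfl⟩) hadj <;>
      simp_all [Sym2.eq_iff, Fin.ext_iff] <;> omega

lemma stepSB2 (r : ℕ) (h2 : r ≤ k) : EraseStep (k+3) (k+3)
    (GG k false false false false 0 0 (r+1) r)
    (GG k false false false false 0 0 r r) := by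
  refine ⟨s(Sum.inr (Sum.inr 1), Sum.inr (Sum.inl ⟨r, by omega⟩)), ?_, ?_,
    insert (Sum.inr (Sum.inr 0)) (insert (Sum.inr (Sum.inr 1)) (insert (Sum.inr (Sum.inr 3))
      (RQ k \ {Sum.inr (Sum.inl ⟨r, by omega⟩)}))),
    insert (Sum.inr (Sum.inl ⟨r, by omega⟩)) (RL k),
    Sum.inr (Sum.inr 2), ?_, ?_, ?_, ?_, ?_, ?_, ?_, ?_⟩
  · simp
  · apply edgeSet_eq_of
    rintro (i | j | m) (i' | j' | m') <;> simp [Sym2.eq_iff, Fin.ext_iff, -Fin.val_eq_zero_iff] <;> omega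
  · rw [Set.disjoint_left]
    rintro z (rfl | rfl | rfl | ⟨⟨j, rfl⟩, hne⟩) hz <;> simp_all [Fin.ext_iff] <;> omega
  · simp
  · simp
  · ext z
    rcases z with i | j | m
    · simp [RL]
    · simp [RQ, Fin.ext_iff]
      omega
    · simp [RL, RQ]
      omega
  · rw [Set.ncard_insert_of_notMem (by simp), Set.ncard_insert_of_notMem (by simp),
      Set.ncard_insert_of_notMem (by simp), Set.ncard_diff_singleton_of_mem mem_RQ_q, ncard_RQ]
    omega
  · rw [Set.ncard_insert_of_notMem (by simp), ncard_RL]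
  · exact ⟨Sum.inr (Sum.inr 1), by simp, Sum.inr (Sum.inl ⟨r, by omega⟩), by simp, rfl⟩
  · rintro x (rfl | rfl | rfl | ⟨⟨j, rfl⟩, hne⟩) y (rfl | ⟨i, rfl⟩) hadj <;>
      simp_all [Sym2.eq_iff, Fin.ext_iff] <;> omega


lemma GG_bot : GG k false false false false 0 0 0 0 = ⊥ := by
  ext x y
  rcases x with i | j | m <;> rcases y with i' | j' | m' <;> simp

lemma GG_A11 : GG k false false false false 1 1 (k+1) (k+1)
    = GG k false false false false 1 0 (k+1) (k+1) := by
  ext x y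
  rcases x with i | j | m <;> rcases y with i' | j' | m' <;> simp [Fin.ext_iff, -Fin.val_eq_zero_iff] <;> omega

lemma GG_B11 : GG k false false false false 0 0 1 1
    = GG k false false false false 0 0 1 0 := by
  ext x y
  rcases x with i | j | m <;> rcases y with i' | j' | m' <;> simp [Fin.ext_iff, -Fin.val_eq_zero_iff] <;> omega

def ErasableN (s t n : ℕ) {V : Type*} (G : SimpleGraph V) : Prop :=
  ∃ c : ℕ → SimpleGraph V, c 0 = G ∧ c n = ⊥ ∧ ∀ i < n, EraseStep s t (c i) (c (i + 1))

lemma erasableN_bot {s t : ℕ} {V : Type*} : ErasableN s t 0 (⊥ : SimpleGraph V) :=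
  ⟨fun _ => ⊥, rfl, rfl, fun i hi => absurd hi (by omega)⟩

lemma ErasableN.prepend {s t n : ℕ} {V : Type*} {G G' : SimpleGraph V}
    (h : EraseStep s t G G') (h2 : ErasableN s t n G') : ErasableN s t (n + 1) G := by
  obtain ⟨c, h0, hn, hstep⟩ := h2
  refine ⟨fun i => Nat.rec G (fun j _ => c j) i, rfl, hn, ?_⟩
  intro i hi
  cases i with
  | zero => simpa [h0] using h
  | succ j => exact hstep j (by omega)

lemma ErasableN.erasable {s t n : ℕ} {V : Type*} {G : SimpleGraph V}
    (h : ErasableN s t n G) : Erasable s t G := by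
  obtain ⟨c, h0, hn, hstep⟩ := h
  exact ⟨n, c, h0, hn, hstep⟩

lemma ErasableN.ncard_eq {s t : ℕ} {V : Type*} [Finite V] :
    ∀ {n : ℕ} {G : SimpleGraph V}, ErasableN s t n G → G.edgeSet.ncard = n := by
  intro n
  induction n with
  | zero =>
    rintro G ⟨c, h0, hn, -⟩
    rw [← h0, hn]
    simp
  | succ n ih =>
    rintro G ⟨c, h0, hn, hstep⟩
    obtain ⟨e, he, heq, -⟩ := hstep 0 (by omega)
    have h1 : ErasableN s t n (c 1) :=
      ⟨fun i => c (i + 1), rfl, hn, fun i hi => hstep (i + 1) (by omega)⟩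
    have h2 := ih h1
    rw [h0] at he heq
    rw [heq, Set.ncard_diff_singleton_of_mem he] at h2
    have hpos : 0 < G.edgeSet.ncard := (Set.ncard_pos G.edgeSet.toFinite).mpr ⟨e, he⟩
    omega

lemma chainB : ∀ r, r ≤ k →
    ErasableN (k+3) (k+3) (2*r+1) (GG k false false false false 0 0 (r+1) (r+1)) := by
  intro r
  induction r with
  | zero =>
    intro _
    have hstep := stepSB2 (k := k) 0 (Nat.zero_le k)
    rw [GG_bot] at hstep
    have h := ErasableN.prepend hstep erasableN_bot
    rwa [← GG_B11] at h
  | succ r ih =>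
    intro hr
    have h2 := ErasableN.prepend (stepSB2 (r+1) (by omega)) (ih (by omega))
    have h3 := ErasableN.prepend (stepSB1 (r+1) (by omega) (by omega)) h2
    have harith : 2*(r+1)+1 = 2*r+1+1+1 := by ring
    rwa [harith]

lemma chainA : ∀ r, r ≤ k + 1 →
    ErasableN (k+3) (k+3) (2*r+1+(2*k+1))
      (GG k false false false false (r+1) (r+1) (k+1) (k+1)) := by
  intro r
  induction r with
  | zero =>
    intro _
    have h := ErasableN.prepend (stepSA2 (k := k) 0 (by omega)) (chainB k le_rfl)
    rw [← GG_A11] at h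
    have harith : 2*0+1+(2*k+1) = 2*k+1+1 := by ring
    rwa [harith]
  | succ r ih =>
    intro hr
    have h2 := ErasableN.prepend (stepSA2 (r+1) (by omega)) (ih (by omega))
    have h3 := ErasableN.prepend (stepSA1 (r+1) (by omega) (by omega)) h2
    have harith : 2*(r+1)+1+(2*k+1) = 2*r+1+(2*k+1)+1+1 := by ring
    rwa [harith]

lemma chainFull :
    ErasableN (k+3) (k+3) (4*k+8) (GG k true true true true (k+2) (k+2) (k+1) (k+1)) := by
  have h4 := chainA (k := k) (k+1) le_rfl
  have h5 := ErasableN.prepend stepS4 h4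
  have h6 := ErasableN.prepend stepS3 h5
  have h7 := ErasableN.prepend stepS2 h6
  have h8 := ErasableN.prepend stepS1 h7
  have harith : 4*k+8 = 2*(k+1)+1+(2*k+1)+1+1+1+1 := by ring
  rwa [harith]

lemma constr_eq : ConstrGraph (k+3) = GG k true true true true (k+2) (k+2) (k+1) (k+1) := by
  ext x y
  rcases x with i | j | m <;> rcases y with i' | j' | m' <;>
    simp [ConstrGraph, GG, SimpleGraph.fromRel_adj, Rel, Fin.ext_iff, -Fin.val_eq_zero_iff] <;> omega

end ErasableAux

/-- For `s > 2`, the above graph on `2s+1` vertices is erasable and has exactly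
`4s−4` edges. -/
theorem constrGraph_erasable (s : ℕ) (hs : 2 < s) :
    Erasable s s (ConstrGraph s) ∧ (ConstrGraph s).edgeSet.ncard = 4 * s - 4 := by
  obtain ⟨k, rfl⟩ : ∃ k, s = k + 3 := ⟨s - 3, by omega⟩
  have h := ErasableAux.chainFull (k := k)
  rw [← ErasableAux.constr_eq] at h
  refine ⟨h.erasable, ?_⟩
  rw [show 4 * (k + 3) - 4 = 4 * k + 8 from by omega]
  exact h.ncard_eq
end
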